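/- arXiv:2010.13667 — 6 statements merged into one kernel-verified Lean document; each statement's English description precedes it below -/
import Mathlib

section
/- Let k ≥ 5 be an integer and ℓ = ⌊(k-1)/2⌋. Let G be a 2-connected simple graph containing no cycle of length at least k, suppose the (ℓ-1)-disintegration H = H(G,ℓ-1) is non-empty, and let P = x₁x₂⋯x_m be an H-path of G with the maximum number of vertices among all H-paths, where m ≥ k. Then: (i) N_H(x₁) ⊆ N_P(x₁) and N_H(x_m) ⊆ N_P(x_m); (ii) d_P(x₁) ≥ d_H(x₁) ≥ ℓ and d_P(x_m) ≥ d_H(x_m) ≥ ℓ; (iii) N_P⁻(x₁) ∩ N_P[x_m] = ∅ and N_P⁺(x_m) ∩ N_P[x₁] = ∅. -/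
open SimpleGraph

variable {V : Type*}

/-- `x 1, …, x m` is a path in `G` (1-indexed): injective on `[1, m]`, with consecutive
vertices adjacent. -/
def IsIndexedPath (G : SimpleGraph V) (x : ℕ → V) (m : ℕ) : Prop :=
  (∀ i j, 1 ≤ i → i ≤ m → 1 ≤ j → j ≤ m → x i = x j → i = j) ∧
  ∀ i, 1 ≤ i → i < m → G.Adj (x i) (x (i + 1))

/-- The vertex set of the indexed path `x 1, …, x m`. -/
def pathVerts (x : ℕ → V) (m : ℕ) : Set V := {v | ∃ i, 1 ≤ i ∧ i ≤ m ∧ x i = v}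

/-- `N_P(v)`: the neighbours of `v` among the vertices of the path. -/
def pathNbrs (G : SimpleGraph V) (x : ℕ → V) (m : ℕ) (v : V) : Set V :=
  {u | u ∈ pathVerts x m ∧ G.Adj v u}

/-- `N_P⁻(x₁)`: immediate predecessors on `P` of the path-neighbours of `x₁`. -/
def predNbrs (G : SimpleGraph V) (x : ℕ → V) (m : ℕ) : Set V :=
  {v | ∃ i, 2 ≤ i ∧ i ≤ m ∧ G.Adj (x 1) (x i) ∧ v = x (i - 1)}

/-- `N_P⁺(x_m)`: immediate successors on `P` of the path-neighbours of `x_m`. -/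
def succNbrs (G : SimpleGraph V) (x : ℕ → V) (m : ℕ) : Set V :=
  {v | ∃ i, 1 ≤ i ∧ i < m ∧ G.Adj (x m) (x i) ∧ v = x (i + 1)}

/-- `G` contains no cycle of length at least `k`, i.e. `c(G) < k`. -/
def NoCycleGE (G : SimpleGraph V) (k : ℕ) : Prop :=
  ∀ (v : V) (w : G.Walk v v), w.IsCycle → w.length < k

/-- `G` contains a cycle of length at least `L`. -/
def HasCycleGE (G : SimpleGraph V) (L : ℕ) : Prop :=
  ∃ (v : V) (w : G.Walk v v), w.IsCycle ∧ L ≤ w.length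

/-- `G` is 2-connected: at least 3 vertices and deleting any single vertex leaves a
connected graph. -/
def TwoConnected (G : SimpleGraph V) [Fintype V] : Prop :=
  3 ≤ Fintype.card V ∧ ∀ v : V, (G.induce {u | u ≠ v}).Connected

/-- The vertex set of the `α`-disintegration `H(G, α)` of `G`: the largest vertex set on
which the induced subgraph has minimum degree at least `α + 1`. -/
noncomputable def disint (G : SimpleGraph V) (α : ℕ) : Set V :=
  ⋃₀ {S : Set V | ∀ v ∈ S, α + 1 ≤ {u | u ∈ S ∧ G.Adj v u}.ncard}

/-- `N_s(G)`: the number of `s`-cliques of `G`. -/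
noncomputable def cliqueCount (G : SimpleGraph V) (s : ℕ) : ℕ :=
  {S : Finset V | G.IsNClique s S}.ncard

/-- `h_s(n, k, a) = C(k - a, s) + (n - k + a) · C(a, s - 1)`. -/
def hval (n k a s : ℕ) : ℕ :=
  Nat.choose (k - a) s + (n - k + a) * Nat.choose a (s - 1)

/-- The graph `H(n, k, a)` on `Fin n`: the first `a` vertices form the set `A`, the next
`k - 2a` vertices form `C`, and the remaining `n - k + a` vertices form `B`; `A ∪ C` is a
clique and every vertex of `A` is joined to every vertex of `B`. -/
def Hgraph (n k a : ℕ) : SimpleGraph (Fin n) :=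
  SimpleGraph.fromRel fun i j =>
    (i.val < a ∧ k - a ≤ j.val) ∨ (i.val < k - a ∧ j.val < k - a)

/-- `G` is isomorphic to a subgraph of `H`. -/
def IsSubgraphOf {W : Type*} (G : SimpleGraph V) (H : SimpleGraph W) : Prop :=
  ∃ f : V → W, Function.Injective f ∧ ∀ a b, G.Adj a b → H.Adj (f a) (f b)

/-- Every connected component of `H` is a star: there is an assignment of a "center" to
each vertex such that every edge joins the common center of its endpoints to a leaf. -/
def IsStarForest (H : SimpleGraph V) : Prop :=
  ∃ f : V → V, ∀ a b, H.Adj a b → (f a = a ∧ f b = a) ∨ (f a = b ∧ f b = b)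

/-- `(i, j)` is a crossing pair of the indexed path `x 1, …, x m`. -/
def CrossPair (G : SimpleGraph V) (x : ℕ → V) (m i j : ℕ) : Prop :=
  1 ≤ i ∧ i < j ∧ j ≤ m ∧ G.Adj (x m) (x i) ∧ G.Adj (x 1) (x j)

/-- `(i, j)` is a minimal crossing pair of the indexed path `x 1, …, x m`. -/
def MinCrossPair (G : SimpleGraph V) (x : ℕ → V) (m i j : ℕ) : Prop :=
  CrossPair G x m i j ∧
    ∀ h, i < h → h < j → ¬G.Adj (x 1) (x h) ∧ ¬G.Adj (x m) (x h)

/-- One application of the successor operation along the path to a set of vertices. -/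
def succStep (x : ℕ → V) (m : ℕ) (S : Set V) : Set V :=
  {v | ∃ i, 1 ≤ i ∧ i < m ∧ x i ∈ S ∧ v = x (i + 1)}

/-- `N_P^{+i}(x_m)`: the `i`-fold iterated successor set of `N_P(x_m)` along the path. -/
def iterNbrSucc (G : SimpleGraph V) (x : ℕ → V) (m i : ℕ) : Set V :=
  (succStep x m)^[i] (pathNbrs G x m (x m))

def myWalkSeg (G : SimpleGraph V) (x : ℕ → V) (a : ℕ) :
    (n : ℕ) → (∀ j, a ≤ j → j < a + n → G.Adj (x j) (x (j + 1))) → G.Walk (x a) (x (a + n))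
  | 0, _ => Walk.nil
  | n + 1, h =>
      Walk.concat (myWalkSeg G x a n fun j hj hj' => h j hj (by omega))
        (h (a + n) (by omega) (by omega))

lemma myWalkSeg_support (G : SimpleGraph V) (x : ℕ → V) (a : ℕ) :
    ∀ (n : ℕ) (h : ∀ j, a ≤ j → j < a + n → G.Adj (x j) (x (j + 1))),
      (myWalkSeg G x a n h).support = (List.range' a (n + 1)).map x
  | 0, _ => by simp [myWalkSeg]
  | n + 1, h => by
      rw [myWalkSeg, Walk.support_concat, myWalkSeg_support G x a n,
        List.range'_concat (step := 1) (s := a) (n := n + 1)]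
      simp

lemma myWalkSeg_length (G : SimpleGraph V) (x : ℕ → V) (a : ℕ) :
    ∀ (n : ℕ) (h : ∀ j, a ≤ j → j < a + n → G.Adj (x j) (x (j + 1))),
      (myWalkSeg G x a n h).length = n
  | 0, _ => rfl
  | n + 1, h => by rw [myWalkSeg, Walk.length_concat, myWalkSeg_length G x a n]

lemma myEdgeStartHelper {G : SimpleGraph V} {v u : V} (p : G.Walk v u)
    (hnd : p.support.Nodup) (w : V) (hw : s(w, v) ∈ p.edges) :
    p.support.tail.head? = some w := by
  cases p with
  | nil => simp at hw
  | cons h q =>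
      rename_i b
      rw [Walk.edges_cons, List.mem_cons] at hw
      rcases hw with hw | hw
      · rw [Sym2.eq_iff] at hw
        rcases hw with ⟨rfl, rfl⟩ | ⟨rfl, -⟩
        · exact absurd rfl h.ne
        · rw [Walk.support_cons, List.tail_cons, q.support_eq_cons]; rfl
      · exfalso
        have hv : v ∈ q.support := Walk.snd_mem_support_of_mem_edges q hw
        rw [Walk.support_cons, List.nodup_cons] at hnd
        exact hnd.1 hv

lemma myNoCross {G : SimpleGraph V} {x : ℕ → V} {m k : ℕ} (hP : IsIndexedPath G x m)
    (hcyc : NoCycleGE G k) (hmk : k ≤ m) (hk : 5 ≤ k) (a : ℕ) (ha1 : 1 ≤ a)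
    (ham : a + 1 ≤ m) (hma : G.Adj (x m) (x a)) (h1a : G.Adj (x 1) (x (a + 1))) :
    False := by
  obtain ⟨hinj, hadj⟩ := hP
  have hseg1adj : ∀ j, a + 1 ≤ j → j < (a + 1) + (m - (a + 1)) → G.Adj (x j) (x (j + 1)) :=
    fun j hj hj' => hadj j (by omega) (by omega)
  have hseg2adj : ∀ j, 1 ≤ j → j < 1 + (a - 1) → G.Adj (x j) (x (j + 1)) :=
    fun j hj hj' => hadj j hj (by omega)
  have e1 : (a + 1) + (m - (a + 1)) = m := by omega
  have e2 : 1 + (a - 1) = a := by omega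
  let seg1 : G.Walk (x (a + 1)) (x m) :=
    (myWalkSeg G x (a + 1) (m - (a + 1)) hseg1adj).copy rfl (by rw [e1])
  let seg2 : G.Walk (x a) (x 1) :=
    ((myWalkSeg G x 1 (a - 1) hseg2adj).copy rfl (by rw [e2])).reverse
  let p : G.Walk (x (a + 1)) (x 1) := seg1.append (Walk.cons hma seg2)
  set L : List ℕ := List.range' (a + 1) (m - a) ++ (List.range' 1 a).reverse with hLdef
  have hsupp : p.support = L.map x := by
    show (seg1.append (Walk.cons hma seg2)).support = _
    rw [Walk.support_append, Walk.support_cons, List.tail_cons]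
    show ((myWalkSeg G x (a + 1) (m - (a + 1)) hseg1adj).copy rfl (by rw [e1])).support ++
      ((myWalkSeg G x 1 (a - 1) hseg2adj).copy rfl (by rw [e2])).reverse.support = _
    rw [Walk.support_reverse, Walk.support_copy, Walk.support_copy,
      myWalkSeg_support, myWalkSeg_support, hLdef, List.map_append, List.map_reverse]
    have e3 : m - (a + 1) + 1 = m - a := by omega
    have e4 : a - 1 + 1 = a := by omega
    rw [e3, e4]
  have hmemL : ∀ i ∈ L, 1 ≤ i ∧ i ≤ m := by
    intro i hi
    rw [hLdef, List.mem_append, List.mem_reverse, List.mem_range'_1, List.mem_range'_1] at hi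
    omega
  have hLnd : L.Nodup := by
    rw [hLdef, List.nodup_append]
    refine ⟨List.nodup_range' .., List.nodup_reverse.mpr (List.nodup_range' ..), ?_⟩
    intro i hi j hij
    rw [List.mem_range'_1] at hi
    rw [List.mem_reverse, List.mem_range'_1] at hij
    omega
  have hnd : p.support.Nodup := by
    rw [hsupp]
    exact hLnd.map_on fun i hi j hj hxe =>
      hinj i j (hmemL i hi).1 (hmemL i hi).2 (hmemL j hj).1 (hmemL j hj).2 hxe
  have hedge : s(x 1, x (a + 1)) ∉ p.edges := by
    intro hmem
    have hh := myEdgeStartHelper p hnd (x 1) hmem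
    rw [hsupp] at hh
    rcases Nat.lt_or_ge (a + 1) m with hlt | hge
    · have hma2 : m - a = (m - a - 2) + 1 + 1 := by omega
      rw [hLdef, hma2, List.range'_succ, List.range'_succ] at hh
      simp only [List.cons_append, List.map_cons, List.tail_cons, List.head?_cons] at hh
      have : (1 : ℕ) = a + 1 + 1 :=
        hinj 1 (a + 1 + 1) (by omega) (by omega) (by omega) (by omega) (Option.some.inj hh).symm
      omega
    · have hm1 : m - a = 1 := by omega
      have hra : List.range' 1 a = List.range' 1 (a - 1) ++ [a] := by
        have h' := List.range'_concat (step := 1) (s := 1) (n := a - 1)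
        have e : 1 + 1 * (a - 1) = a := by omega
        have e' : a - 1 + 1 = a := by omega
        rw [e, e'] at h'
        exact h'
      rw [hLdef, hm1, List.range'_one, hra, List.reverse_append, List.reverse_singleton] at hh
      simp only [List.singleton_append, List.cons_append, List.map_cons, List.tail_cons,
        List.head?_cons] at hh
      have h1a' : (1 : ℕ) = a :=
        hinj 1 a (by omega) (by omega) (by omega) (by omega) (Option.some.inj hh).symm
      omega
  let c : G.Walk (x 1) (x 1) := Walk.cons h1a p
  have hcycle : c.IsCycle := by
    rw [Walk.cons_isCycle_iff]
    exact ⟨Walk.IsPath.mk' hnd, hedge⟩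
  have hlen : c.length = m := by
    show (Walk.cons h1a (seg1.append (Walk.cons hma seg2))).length = m
    rw [Walk.length_cons, Walk.length_append, Walk.length_cons, Walk.length_reverse,
      Walk.length_copy, Walk.length_copy, myWalkSeg_length, myWalkSeg_length]
    omega
  have := hcyc (x 1) c hcycle
  omega

/-- Basic properties of a longest `H`-path (Claim 3.1). -/
theorem stmt_2 (k ℓ : ℕ) (hk : 5 ≤ k) (hℓ : ℓ = (k - 1) / 2)
    {V : Type*} [Fintype V] (G : SimpleGraph V) (h2c : TwoConnected G)
    (hcyc : NoCycleGE G k) (D : Set V) (hD : D = disint G (ℓ - 1)) (hne : D.Nonempty)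
    (x : ℕ → V) (m : ℕ) (hP : IsIndexedPath G x m) (hx1 : x 1 ∈ D) (hxm : x m ∈ D)
    (hmax : ∀ (y : ℕ → V) (m' : ℕ), IsIndexedPath G y m' → y 1 ∈ D → y m' ∈ D → m' ≤ m)
    (hmk : k ≤ m) :
    ({u | u ∈ D ∧ G.Adj (x 1) u} ⊆ pathNbrs G x m (x 1)) ∧
    ({u | u ∈ D ∧ G.Adj (x m) u} ⊆ pathNbrs G x m (x m)) ∧
    (ℓ ≤ {u | u ∈ D ∧ G.Adj (x 1) u}.ncard ∧
      {u | u ∈ D ∧ G.Adj (x 1) u}.ncard ≤ (pathNbrs G x m (x 1)).ncard) ∧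
    (ℓ ≤ {u | u ∈ D ∧ G.Adj (x m) u}.ncard ∧
      {u | u ∈ D ∧ G.Adj (x m) u}.ncard ≤ (pathNbrs G x m (x m)).ncard) ∧
    (predNbrs G x m ∩ (pathNbrs G x m (x m) ∪ {x m}) = ∅) ∧
    (succNbrs G x m ∩ (pathNbrs G x m (x 1) ∪ {x 1}) = ∅) := by
  have hm5 : 5 ≤ m := le_trans hk hmk
  have key1 : {u | u ∈ D ∧ G.Adj (x 1) u} ⊆ pathNbrs G x m (x 1) := by
    rintro u ⟨hu, hadj⟩
    refine ⟨?_, hadj⟩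
    by_contra hnot
    have hyP : IsIndexedPath G (fun j => if j = 1 then u else x (j - 1)) (m + 1) := by
      constructor
      · intro i j hi him hj hjm heq
        simp only at heq
        by_cases hi1 : i = 1 <;> by_cases hj1 : j = 1
        · omega
        · rw [if_pos hi1, if_neg hj1] at heq
          exact absurd ⟨j - 1, by omega, by omega, heq.symm⟩ hnot
        · rw [if_neg hi1, if_pos hj1] at heq
          exact absurd ⟨i - 1, by omega, by omega, heq⟩ hnot
        · rw [if_neg hi1, if_neg hj1] at heq
          have := hP.1 (i - 1) (j - 1) (by omega) (by omega) (by omega) (by omega) heq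
          omega
      · intro i hi him
        simp only
        by_cases hi1 : i = 1
        · subst hi1
          rw [if_pos rfl, if_neg (by omega : (1 : ℕ) + 1 ≠ 1)]
          simpa using hadj.symm
        · rw [if_neg hi1, if_neg (by omega : i + 1 ≠ 1)]
          have e : i - 1 + 1 = i + 1 - 1 := by omega
          have := hP.2 (i - 1) (by omega) (by omega)
          rwa [e] at this
    have h1D : (fun j => if j = 1 then u else x (j - 1)) 1 ∈ D := by
      show (if (1 : ℕ) = 1 then u else x (1 - 1)) ∈ D
      rw [if_pos rfl]; exact hu
    have h2D : (fun j => if j = 1 then u else x (j - 1)) (m + 1) ∈ D := by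
      show (if m + 1 = 1 then u else x (m + 1 - 1)) ∈ D
      rw [if_neg (by omega : m + 1 ≠ 1)]
      simpa using hxm
    have := hmax _ (m + 1) hyP h1D h2D
    omega
  have key2 : {u | u ∈ D ∧ G.Adj (x m) u} ⊆ pathNbrs G x m (x m) := by
    rintro u ⟨hu, hadj⟩
    refine ⟨?_, hadj⟩
    by_contra hnot
    have hyP : IsIndexedPath G (fun j => if j = m + 1 then u else x j) (m + 1) := by
      constructor
      · intro i j hi him hj hjm heq
        simp only at heq
        by_cases hi1 : i = m + 1 <;> by_cases hj1 : j = m + 1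
        · omega
        · rw [if_pos hi1, if_neg hj1] at heq
          exact absurd ⟨j, by omega, by omega, heq.symm⟩ hnot
        · rw [if_neg hi1, if_pos hj1] at heq
          exact absurd ⟨i, by omega, by omega, heq⟩ hnot
        · rw [if_neg hi1, if_neg hj1] at heq
          exact hP.1 i j (by omega) (by omega) (by omega) (by omega) heq
      · intro i hi him
        simp only
        by_cases hi1 : i = m
        · subst hi1
          rw [if_neg (by omega : i ≠ i + 1), if_pos rfl]
          exact hadj
        · rw [if_neg (by omega : i ≠ m + 1), if_neg (by omega : i + 1 ≠ m + 1)]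
          exact hP.2 i hi (by omega)
    have h1D : (fun j => if j = m + 1 then u else x j) 1 ∈ D := by
      show (if (1 : ℕ) = m + 1 then u else x 1) ∈ D
      rw [if_neg (by omega : (1 : ℕ) ≠ m + 1)]; exact hx1
    have h2D : (fun j => if j = m + 1 then u else x j) (m + 1) ∈ D := by
      show (if m + 1 = m + 1 then u else x (m + 1)) ∈ D
      rw [if_pos rfl]; exact hu
    have := hmax _ (m + 1) hyP h1D h2D
    omega
  have hdeg : ∀ v, v ∈ D → ℓ ≤ {u | u ∈ D ∧ G.Adj v u}.ncard := by
    intro v hv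
    rw [hD] at hv
    unfold disint at hv
    obtain ⟨S, hS, hvS⟩ := Set.mem_sUnion.mp hv
    have hsub : S ⊆ D := by
      rw [hD]
      exact Set.subset_sUnion_of_mem hS
    have h1 := hS v hvS
    have e : ℓ - 1 + 1 = ℓ := by omega
    rw [e] at h1
    refine h1.trans (Set.ncard_le_ncard ?_ (Set.toFinite _))
    rintro u ⟨huS, hadju⟩
    exact ⟨hsub huS, hadju⟩
  refine ⟨key1, key2, ⟨hdeg _ hx1, Set.ncard_le_ncard key1 (Set.toFinite _)⟩,
    ⟨hdeg _ hxm, Set.ncard_le_ncard key2 (Set.toFinite _)⟩, ?_, ?_⟩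
  · rw [Set.eq_empty_iff_forall_notMem]
    rintro v ⟨⟨i, hi2, him, hadj1, rfl⟩, hmem⟩
    simp only [Set.mem_union, Set.mem_singleton_iff, pathNbrs, Set.mem_setOf_eq] at hmem
    rcases hmem with ⟨hvP, hadjm⟩ | hveq
    · have e : i - 1 + 1 = i := by omega
      refine myNoCross hP hcyc hmk hk (i - 1) (by omega) (by omega) hadjm ?_
      rw [e]; exact hadj1
    · have : i - 1 = m := hP.1 (i - 1) m (by omega) (by omega) (by omega) (by omega) hveq
      omega
  · rw [Set.eq_empty_iff_forall_notMem]
    rintro v ⟨⟨i, hi1, him, hadjm, rfl⟩, hmem⟩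
    simp only [Set.mem_union, Set.mem_singleton_iff, pathNbrs, Set.mem_setOf_eq] at hmem
    rcases hmem with ⟨hvP, hadj1⟩ | hveq
    · exact myNoCross hP hcyc hmk hk i hi1 (by omega) hadjm hadj1
    · have : i + 1 = 1 := hP.1 (i + 1) 1 (by omega) (by omega) (by omega) (by omega) hveq
      omega
end

section
/- Let k ≥ 5 be an integer and ℓ = ⌊(k-1)/2⌋. Let G be a 2-connected simple graph containing no cycle of length at least k, suppose the (ℓ-1)-disintegration H = H(G,ℓ-1) is non-empty, and let P = x₁x₂⋯x_m be an H-path of G with the maximum number of vertices among all H-paths, where m ≥ k. If (i,j) is a minimal crossing pair of P, then m - k < j - i - 1 ≤ m - 2ℓ; equivalently, 2ℓ ≤ |{x₁,…,x_i} ∪ {x_j,…,x_m}| ≤ 2ℓ + 1 in case m - k < j - i - 1, i.e. the cycle x₁⋯x_i x_m⋯x_j x₁ has length strictly less than k. -/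
open SimpleGraph

variable {V : Type*}

lemma walkUp_aux (G : SimpleGraph V) (x : ℕ → V) :
    ∀ (n a : ℕ), (∀ t, a ≤ t → t < a + n → G.Adj (x t) (x (t+1))) →
    ∃ w : G.Walk (x a) (x (a + n)),
      w.length = n ∧
      w.support = (List.range (n+1)).map (fun t => x (a + t)) ∧
      w.edges = (List.range n).map (fun t => s(x (a + t), x (a + t + 1))) := by
  intro n
  induction n with
  | zero =>
    intro a _
    exact ⟨SimpleGraph.Walk.nil, by simp, by simp [List.range_succ], by simp⟩
  | succ n ih =>
    intro a h
    obtain ⟨w, hl, hs, he⟩ := ih (a+1) (fun t ht ht' => h t (by omega) (by omega))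
    refine ⟨SimpleGraph.Walk.cons (h a le_rfl (by omega))
      (w.copy rfl (congrArg x (by omega : a + 1 + n = a + (n+1)))), ?_, ?_, ?_⟩
    · simp [hl]
    · rw [SimpleGraph.Walk.support_cons, SimpleGraph.Walk.support_copy, hs,
        List.range_succ_eq_map (n := n+1)]
      simp only [List.map_cons, List.map_map]
      refine List.cons_eq_cons.mpr ⟨rfl, ?_⟩
      apply List.map_congr_left
      intro t _
      simp only [Function.comp_apply]
      exact congrArg x (by omega)
    · rw [SimpleGraph.Walk.edges_cons, SimpleGraph.Walk.edges_copy, he,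
        List.range_succ_eq_map (n := n)]
      simp only [List.map_cons, List.map_map]
      refine List.cons_eq_cons.mpr ⟨rfl, ?_⟩
      apply List.map_congr_left
      intro t _
      simp only [Function.comp_apply]
      have h1 : a + 1 + t = a + (t+1) := by omega
      rw [h1]

lemma cross_cycle (G : SimpleGraph V) (x : ℕ → V) (m p q : ℕ)
    (hP : IsIndexedPath G x m) (hp : 1 ≤ p) (hpq : p < q) (hq : q ≤ m)
    (hA : G.Adj (x m) (x p)) (hB : G.Adj (x 1) (x q))
    (h3 : 3 ≤ p + (m - q) + 1) :
    ∃ (v : V) (w : G.Walk v v), w.IsCycle ∧ w.length = p + (m - q) + 1 := by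
  have hq2 : 2 ≤ q := by omega
  have hm1 : 1 ≤ m := by omega
  obtain ⟨w1, hl1, hs1, he1⟩ := walkUp_aux G x (m - q) q
    (fun t ht ht' => hP.2 t (by omega) (by omega))
  obtain ⟨w2, hl2, hs2, he2⟩ := walkUp_aux G x (p - 1) 1
    (fun t ht ht' => hP.2 t (by omega) (by omega))
  have eq1 : x (q + (m - q)) = x m := congrArg x (by omega)
  have eq2 : x (1 + (p - 1)) = x p := congrArg x (by omega)
  -- Q : walk from x q to x 1
  let w1' : G.Walk (x q) (x m) := w1.copy rfl eq1
  let w2' : G.Walk (x 1) (x p) := w2.copy rfl eq2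
  let Q : G.Walk (x q) (x 1) := w1'.append (SimpleGraph.Walk.cons hA w2'.reverse)
  -- index extraction helper
  have inj := hP.1
  have hQsupp : Q.support =
      ((List.range (m - q + 1)).map (fun t => x (q + t))) ++
      (((List.range (p - 1 + 1)).map (fun t => x (1 + t))).reverse) := by
    show (w1'.append _).support = _
    rw [SimpleGraph.Walk.support_append, SimpleGraph.Walk.support_cons, List.tail_cons,
      SimpleGraph.Walk.support_reverse]
    show (w1.copy rfl eq1).support ++ ((w2.copy rfl eq2).support).reverse = _
    rw [SimpleGraph.Walk.support_copy, SimpleGraph.Walk.support_copy, hs1, hs2]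
  have hQpath : Q.IsPath := by
    rw [SimpleGraph.Walk.isPath_def, hQsupp]
    have : ((List.range (m - q + 1)).map (fun t => x (q + t))) ++
        (((List.range (p - 1 + 1)).map (fun t => x (1 + t))).reverse) =
        (((List.range (m - q + 1)).map (fun t => q + t)) ++
         ((List.range (p - 1 + 1)).map (fun t => 1 + t)).reverse).map x := by
      rw [List.map_append, List.map_map, List.map_reverse, List.map_map]
      rfl
    rw [this]
    apply List.Nodup.map_on
    · intro s hs t ht hxy
      have hmem : ∀ u ∈ (((List.range (m - q + 1)).map (fun t => q + t)) ++
          ((List.range (p - 1 + 1)).map (fun t => 1 + t)).reverse), 1 ≤ u ∧ u ≤ m := by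
        intro u hu
        rcases List.mem_append.1 hu with h | h
        · obtain ⟨t', ht', rfl⟩ := List.mem_map.1 h
          rw [List.mem_range] at ht'; omega
        · obtain ⟨t', ht', rfl⟩ := List.mem_map.1 (List.mem_reverse.1 h)
          rw [List.mem_range] at ht'; omega
      obtain ⟨h1, h2⟩ := hmem s hs
      obtain ⟨h3', h4⟩ := hmem t ht
      exact inj s t h1 h2 h3' h4 hxy
    · rw [List.nodup_append]
      refine ⟨?_, ?_, ?_⟩
      · exact (List.nodup_range).map (add_right_injective q)
      · exact List.nodup_reverse.2 ((List.nodup_range).map (add_right_injective 1))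
      · intro u hu v hv
        obtain ⟨t', ht', rfl⟩ := List.mem_map.1 hu
        obtain ⟨t'', ht'', he⟩ := List.mem_map.1 (List.mem_reverse.1 hv)
        rw [List.mem_range] at ht' ht''
        omega
  have hQedges : Q.edges =
      ((List.range (m - q)).map (fun t => s(x (q + t), x (q + t + 1)))) ++
      (s(x m, x p) ::
        (((List.range (p - 1)).map (fun t => s(x (1 + t), x (1 + t + 1)))).reverse)) := by
    show (w1'.append _).edges = _
    rw [SimpleGraph.Walk.edges_append, SimpleGraph.Walk.edges_cons,
      SimpleGraph.Walk.edges_reverse]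
    show (w1.copy rfl eq1).edges ++ _ :: ((w2.copy rfl eq2).edges).reverse = _
    rw [SimpleGraph.Walk.edges_copy, SimpleGraph.Walk.edges_copy, he1, he2]
  have hnotmem : s(x 1, x q) ∉ Q.edges := by
    rw [hQedges]
    intro hmem
    rcases List.mem_append.1 hmem with h | h
    · obtain ⟨t, ht, he⟩ := List.mem_map.1 h
      rw [List.mem_range] at ht
      rcases Sym2.eq_iff.1 he.symm with ⟨ha, hb⟩ | ⟨ha, hb⟩
      · have := inj 1 (q+t) (by omega) (by omega) (by omega) (by omega) ha
        omega
      · have := inj 1 (q+t+1) (by omega) (by omega) (by omega) (by omega) ha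
        omega
    · rcases List.mem_cons.1 h with h | h
      · rcases Sym2.eq_iff.1 h with ⟨ha, hb⟩ | ⟨ha, hb⟩
        · have h1 := inj 1 m (by omega) (by omega) (by omega) (by omega) ha
          omega
        · have h1 := inj 1 p (by omega) (by omega) (by omega) (by omega) ha
          have h2 := inj q m (by omega) (by omega) (by omega) (by omega) hb
          omega
      · obtain ⟨t, ht, he⟩ := List.mem_map.1 (List.mem_reverse.1 h)
        rw [List.mem_range] at ht
        rcases Sym2.eq_iff.1 he.symm with ⟨ha, hb⟩ | ⟨ha, hb⟩
        · have h1 := inj 1 (1+t) (by omega) (by omega) (by omega) (by omega) ha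
          have h2 := inj q (1+t+1) (by omega) (by omega) (by omega) (by omega) hb
          omega
        · have := inj 1 (1+t+1) (by omega) (by omega) (by omega) (by omega) ha
          omega
  refine ⟨x 1, SimpleGraph.Walk.cons hB Q, ?_, ?_⟩
  · exact (SimpleGraph.Walk.cons_isCycle_iff Q hB).2 ⟨hQpath, hnotmem⟩
  · have : Q.length = (m - q) + (1 + (p - 1)) := by
      show (w1'.append _).length = _
      rw [SimpleGraph.Walk.length_append, SimpleGraph.Walk.length_cons,
        SimpleGraph.Walk.length_reverse]
      show (w1.copy rfl eq1).length + ((w2.copy rfl eq2).length + 1) = _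
      rw [SimpleGraph.Walk.length_copy, SimpleGraph.Walk.length_copy, hl1, hl2]
      omega
    rw [SimpleGraph.Walk.length_cons, this]
    omega

lemma nbr_left (G : SimpleGraph V) (D : Set V) (x : ℕ → V) (m : ℕ)
    (hP : IsIndexedPath G x m) (hm : 1 ≤ m) (hxm : x m ∈ D)
    (hmax : ∀ (y : ℕ → V) (m' : ℕ), IsIndexedPath G y m' → y 1 ∈ D → y m' ∈ D → m' ≤ m)
    (y : V) (hy : y ∈ D) (hadj : G.Adj (x 1) y) : y ∈ pathVerts x m := by
  by_contra hnot
  set z : ℕ → V := fun n => if n = 1 then y else x (n - 1) with hzdef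
  have hz1 : z 1 = y := by simp [hzdef]
  have hzs : ∀ n, 2 ≤ n → z n = x (n - 1) := by
    intro n hn; simp [hzdef]; intro h; omega
  have hz : IsIndexedPath G z (m + 1) := by
    constructor
    · intro a b ha ham hb hbm hab
      rcases Nat.lt_or_ge a 2 with ha2 | ha2 <;> rcases Nat.lt_or_ge b 2 with hb2 | hb2
      · omega
      · exfalso
        have : a = 1 := by omega
        rw [this, hz1, hzs b hb2] at hab
        exact hnot ⟨b - 1, by omega, by omega, hab.symm⟩
      · exfalso
        have : b = 1 := by omega
        rw [this, hz1, hzs a ha2] at hab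
        exact hnot ⟨a - 1, by omega, by omega, hab⟩
      · rw [hzs a ha2, hzs b hb2] at hab
        have := hP.1 (a-1) (b-1) (by omega) (by omega) (by omega) (by omega) hab
        omega
    · intro a ha ham
      rcases Nat.lt_or_ge a 2 with ha2 | ha2
      · have : a = 1 := by omega
        rw [this, hz1, hzs 2 le_rfl]
        exact hadj.symm
      · rw [hzs a ha2, hzs (a+1) (by omega)]
        rw [show a + 1 - 1 = a - 1 + 1 by omega]
        exact hP.2 (a - 1) (by omega) (by omega)
  have := hmax z (m+1) hz (by rw [hz1]; exact hy)
    (by rw [hzs (m+1) (by omega)]; simpa using hxm)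
  omega

lemma nbr_right (G : SimpleGraph V) (D : Set V) (x : ℕ → V) (m : ℕ)
    (hP : IsIndexedPath G x m) (hm : 1 ≤ m) (hx1 : x 1 ∈ D)
    (hmax : ∀ (y : ℕ → V) (m' : ℕ), IsIndexedPath G y m' → y 1 ∈ D → y m' ∈ D → m' ≤ m)
    (y : V) (hy : y ∈ D) (hadj : G.Adj (x m) y) : y ∈ pathVerts x m := by
  by_contra hnot
  set z : ℕ → V := fun n => if n ≤ m then x n else y with hzdef
  have hzs : ∀ n, n ≤ m → z n = x n := by intro n hn; simp [hzdef, hn]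
  have hzm : z (m + 1) = y := by simp [hzdef]
  have hz : IsIndexedPath G z (m + 1) := by
    constructor
    · intro a b ha ham hb hbm hab
      rcases Nat.lt_or_ge m a with ha2 | ha2 <;> rcases Nat.lt_or_ge m b with hb2 | hb2
      · omega
      · exfalso
        have : a = m + 1 := by omega
        rw [this, hzm, hzs b hb2] at hab
        exact hnot ⟨b, by omega, by omega, hab.symm⟩
      · exfalso
        have : b = m + 1 := by omega
        rw [this, hzm, hzs a ha2] at hab
        exact hnot ⟨a, by omega, by omega, hab⟩
      · rw [hzs a ha2, hzs b hb2] at hab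
        exact hP.1 a b (by omega) (by omega) (by omega) (by omega) hab
    · intro a ha ham
      rcases Nat.lt_or_ge a m with ha2 | ha2
      · rw [hzs a (by omega), hzs (a+1) (by omega)]
        exact hP.2 a ha ha2
      · have : a = m := by omega
        rw [this, hzs m le_rfl, hzm]
        exact hadj
  have := hmax z (m+1) hz (by rw [hzs 1 hm]; exact hx1) (by rw [hzm]; exact hy)
  omega

open Classical in
noncomputable def idxOf (x : ℕ → V) (m : ℕ) (u : V) : ℕ :=
  if h : ∃ s, 1 ≤ s ∧ s ≤ m ∧ x s = u then h.choose else 0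

lemma idxOf_spec {x : ℕ → V} {m : ℕ} {u : V} (hu : u ∈ pathVerts x m) :
    1 ≤ idxOf x m u ∧ idxOf x m u ≤ m ∧ x (idxOf x m u) = u := by
  obtain ⟨s, hs⟩ := hu
  rw [idxOf, dif_pos ⟨s, hs⟩]
  exact (⟨s, hs⟩ : ∃ s, 1 ≤ s ∧ s ≤ m ∧ x s = u).choose_spec


/-- Bounds on the length of a minimal crossing pair (Claim 3.2 (ii)). -/
theorem stmt_3 (k ℓ : ℕ) (hk : 5 ≤ k) (hℓ : ℓ = (k - 1) / 2)
    {V : Type*} [Fintype V] (G : SimpleGraph V) (h2c : TwoConnected G)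
    (hcyc : NoCycleGE G k) (D : Set V) (hD : D = disint G (ℓ - 1)) (hne : D.Nonempty)
    (x : ℕ → V) (m : ℕ) (hP : IsIndexedPath G x m) (hx1 : x 1 ∈ D) (hxm : x m ∈ D)
    (hmax : ∀ (y : ℕ → V) (m' : ℕ), IsIndexedPath G y m' → y 1 ∈ D → y m' ∈ D → m' ≤ m)
    (hmk : k ≤ m) (i j : ℕ) (hij : MinCrossPair G x m i j) :
    m - k < j - i - 1 ∧ j - i - 1 ≤ m - 2 * ℓ := by

  obtain ⟨⟨hi1, hiltj, hjm, hAmi, hA1j⟩, hmin⟩ := hij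
  have hm1 : 1 ≤ m := by omega
  have hl2 : 2 ≤ ℓ := by omega
  constructor
  · by_contra hcon
    obtain ⟨v, w, hw, hlen⟩ := cross_cycle G x m i j hP hi1 hiltj hjm hAmi hA1j (by omega)
    have := hcyc v w hw
    omega
  · -- degree facts
    obtain ⟨S1, hS1, hx1S⟩ := Set.mem_sUnion.1 (hD ▸ hx1)
    obtain ⟨S2, hS2, hxmS⟩ := Set.mem_sUnion.1 (hD ▸ hxm)
    have hS1D : S1 ⊆ D := hD ▸ Set.subset_sUnion_of_mem hS1
    have hS2D : S2 ⊆ D := hD ▸ Set.subset_sUnion_of_mem hS2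
    set N1 : Set V := {u | u ∈ S1 ∧ G.Adj (x 1) u} with hN1def
    set N2 : Set V := {u | u ∈ S2 ∧ G.Adj (x m) u} with hN2def
    have hdeg1 : ℓ ≤ N1.ncard := by
      have := hS1 (x 1) hx1S
      rwa [show ℓ - 1 + 1 = ℓ by omega] at this
    have hdeg2 : ℓ ≤ N2.ncard := by
      have := hS2 (x m) hxmS
      rwa [show ℓ - 1 + 1 = ℓ by omega] at this
    -- index properties
    have hA1 : ∀ u ∈ N1, 2 ≤ idxOf x m u ∧ idxOf x m u ≤ m ∧ x (idxOf x m u) = u ∧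
        (idxOf x m u ≤ i ∨ j ≤ idxOf x m u) := by
      intro u hu
      have hup : u ∈ pathVerts x m :=
        nbr_left G D x m hP hm1 hxm hmax u (hS1D hu.1) hu.2
      obtain ⟨hs1, hsm, hxs⟩ := idxOf_spec hup
      set s := idxOf x m u with hsdef
      have hs2 : 2 ≤ s := by
        rcases Nat.lt_or_ge s 2 with h | h
        · exfalso
          have : s = 1 := by omega
          rw [this] at hxs
          exact G.irrefl (hxs ▸ hu.2)
        · exact h
      refine ⟨hs2, hsm, hxs, ?_⟩
      by_contra hcon
      push_neg at hcon
      exact (hmin s (by omega) (by omega)).1 (hxs ▸ hu.2)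
    have hB1 : ∀ u ∈ N2, 1 ≤ idxOf x m u ∧ idxOf x m u ≤ m - 1 ∧ x (idxOf x m u) = u ∧
        (idxOf x m u ≤ i ∨ j ≤ idxOf x m u) := by
      intro u hu
      have hup : u ∈ pathVerts x m :=
        nbr_right G D x m hP hm1 hx1 hmax u (hS2D hu.1) hu.2
      obtain ⟨hs1, hsm, hxs⟩ := idxOf_spec hup
      set s := idxOf x m u with hsdef
      have hsm' : s ≤ m - 1 := by
        rcases Nat.lt_or_ge s m with h | h
        · omega
        · exfalso
          have : s = m := by omega
          rw [this] at hxs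
          exact G.irrefl (hxs ▸ hu.2)
      refine ⟨hs1, hsm', hxs, ?_⟩
      by_contra hcon
      push_neg at hcon
      exact (hmin s (by omega) (by omega)).2 (hxs ▸ hu.2)
    set A : Set ℕ := (fun u => idxOf x m u - 1) '' N1 with hAdef
    set B : Set ℕ := (fun u => idxOf x m u) '' N2 with hBdef
    have hAcard : ℓ ≤ A.ncard := by
      rw [hAdef, Set.ncard_image_of_injOn]
      · exact hdeg1
      · intro u hu u' hu' heq
        dsimp only at heq
        obtain ⟨h2u, _, hxu, _⟩ := hA1 u hu
        obtain ⟨h2u', _, hxu', _⟩ := hA1 u' hu'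
        have : idxOf x m u = idxOf x m u' := by omega
        rw [← hxu, ← hxu', this]
    have hBcard : ℓ ≤ B.ncard := by
      rw [hBdef, Set.ncard_image_of_injOn]
      · exact hdeg2
      · intro u hu u' hu' heq
        dsimp only at heq
        obtain ⟨_, _, hxu, _⟩ := hB1 u hu
        obtain ⟨_, _, hxu', _⟩ := hB1 u' hu'
        rw [← hxu, ← hxu', heq]
    have hdisj : Disjoint A B := by
      rw [Set.disjoint_left]
      rintro t ⟨u, hu, rfl⟩ ⟨v, hv, hvt⟩
      dsimp only at hvt
      obtain ⟨h2u, hum, hxu, _⟩ := hA1 u hu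
      obtain ⟨h1v, hvm, hxv, _⟩ := hB1 v hv
      set s := idxOf x m u with hsdef
      have hadj1 : G.Adj (x 1) (x s) := by
        have h := hu.2
        rw [← hxu] at h
        exact h
      have hadjm : G.Adj (x m) (x (s - 1)) := by
        have h := hv.2
        rw [← hxv, hvt] at h
        exact h
      obtain ⟨w0, w, hw, hlen⟩ :=
        cross_cycle G x m (s-1) s hP (by omega) (by omega) (by omega) hadjm hadj1 (by omega)
      have := hcyc w0 w hw
      omega
    have hsub : A ∪ B ⊆ ↑(Finset.Icc 1 i ∪ Finset.Icc (j-1) (m-1)) := by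
      rintro t (⟨u, hu, rfl⟩ | ⟨u, hu, rfl⟩)
      · obtain ⟨h2u, hum, _, hior⟩ := hA1 u hu
        simp only [Finset.coe_union, Set.mem_union, Finset.mem_coe, Finset.mem_Icc]
        omega
      · obtain ⟨h1u, hum, _, hior⟩ := hB1 u hu
        simp only [Finset.coe_union, Set.mem_union, Finset.mem_coe, Finset.mem_Icc]
        omega
    have hAfin : A.Finite := (Set.toFinite N1).image _
    have hBfin : B.Finite := (Set.toFinite N2).image _
    have hun : (A ∪ B).ncard = A.ncard + B.ncard := Set.ncard_union_eq hdisj hAfin hBfin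
    have hle : (A ∪ B).ncard ≤ ((Finset.Icc 1 i ∪ Finset.Icc (j-1) (m-1) : Finset ℕ) : Set ℕ).ncard :=
      Set.ncard_le_ncard hsub (Finset.finite_toSet _)
    rw [Set.ncard_coe_finset] at hle
    have hcard := Finset.card_union_le (Finset.Icc 1 i) (Finset.Icc (j-1) (m-1))
    rw [Nat.card_Icc, Nat.card_Icc] at hcard
    omega
end

section
/- Let k ≥ 5 be an integer and ℓ = ⌊(k-1)/2⌋. Let G be a simple graph containing no cycle of length at least k and let P = x₁x₂⋯x_m be a crossing path in G with m ≥ k, d_P(x₁) ≥ ℓ and d_P(x_m) ≥ ℓ. Set W = V(P) \ (⋃_{i=1}^{m-k+1} N_P^{+i}(x_m) ∪ {x₁}). Then: if k is even, x₁ is adjacent to all vertices of W except at most one, and moreover if d_P(x₁) = |W| then x₁ is adjacent to every vertex of W; and if k is odd, x₁ is adjacent to every vertex of W. -/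
open SimpleGraph

variable {V : Type*}

private lemma exists_walk_up {V : Type*} {G : SimpleGraph V} {x : ℕ → V} {m : ℕ}
    (hP : IsIndexedPath G x m) :
    ∀ n i : ℕ, 1 ≤ i → i + n ≤ m →
      ∃ w : G.Walk (x i) (x (i + n)), w.length = n ∧
        w.support = (List.range (n + 1)).map (fun d => x (i + d)) ∧
        w.edges = (List.range n).map (fun d => s(x (i + d), x (i + d + 1))) := by
  intro n
  induction n with
  | zero =>
    intro i hi him
    exact ⟨SimpleGraph.Walk.nil, by simp, by rw [show List.range 1 = [0] from rfl]; rfl, by simp⟩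
  | succ n ih =>
    intro i hi him
    obtain ⟨w, hl, hs, he⟩ := ih i hi (by omega)
    refine ⟨w.concat (hP.2 (i + n) (by omega) (by omega)), ?_, ?_, ?_⟩
    · simp [hl]
    · have h2 : List.range (n + 1 + 1) = List.range (n + 1) ++ [n + 1] := List.range_succ
      rw [SimpleGraph.Walk.support_concat, hs, h2, List.map_append]
      rfl
    · have h2 : List.range (n + 1) = List.range n ++ [n] := List.range_succ
      rw [SimpleGraph.Walk.edges_concat, he, h2, List.map_append, List.concat_eq_append]
      rfl

private lemma cross_gap {V : Type*} {G : SimpleGraph V} {x : ℕ → V} {m k : ℕ}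
    (hcyc : NoCycleGE G k) (hP : IsIndexedPath G x m) (hk : 5 ≤ k) (hmk : k ≤ m)
    {t a : ℕ} (ht1 : 1 ≤ t) (hta : t < a) (ham : a ≤ m)
    (hadjm : G.Adj (x m) (x t)) (hadj1 : G.Adj (x 1) (x a)) :
    t + (m - k + 1) < a := by
  by_cases hdeg : t = 1 ∧ a = m
  · omega
  have ha2 : 2 ≤ a := by omega
  obtain ⟨e, rfl⟩ : ∃ e, m = a + e := ⟨m - a, by omega⟩
  obtain ⟨t', rfl⟩ : ∃ t', t = 1 + t' := ⟨t - 1, by omega⟩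
  have hinj := hP.1
  obtain ⟨w1, hw1l, hw1s, hw1e⟩ := exists_walk_up hP t' 1 le_rfl (by omega)
  obtain ⟨w2, hw2l, hw2s, hw2e⟩ := exists_walk_up hP e a (by omega) le_rfl
  set p : G.Walk (x 1) (x a) :=
    w1.append (SimpleGraph.Walk.cons hadjm.symm w2.reverse) with hp
  set L : List ℕ := (List.range (t' + 1)).map (fun d => 1 + d) ++
      (((List.range (e + 1)).map (fun d => a + d)).reverse) with hL
  have hsup : p.support = L.map x := by
    simp only [hp, SimpleGraph.Walk.support_append, hw1s,
      SimpleGraph.Walk.support_cons, List.tail_cons,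
      SimpleGraph.Walk.support_reverse, hw2s, hL, List.map_append,
      List.map_reverse, List.map_map]
    rfl
  have hLmem : ∀ c ∈ L, 1 ≤ c ∧ c ≤ a + e := by
    intro c hc
    simp only [hL, List.mem_append, List.mem_map, List.mem_range,
      List.mem_reverse] at hc
    rcases hc with ⟨d, hd, rfl⟩ | ⟨d, hd, rfl⟩ <;> omega
  have hLnd : L.Nodup := by
    rw [hL, List.nodup_append]
    refine ⟨List.Nodup.map (fun u v h => by omega) List.nodup_range,
      List.nodup_reverse.mpr (List.Nodup.map (fun u v h => by omega) List.nodup_range), ?_⟩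
    intro c hc1 d hc2 hcd
    simp only [List.mem_map, List.mem_range, List.mem_reverse] at hc1 hc2
    obtain ⟨d1, hd1, rfl⟩ := hc1
    obtain ⟨d2, hd2, h2⟩ := hc2
    omega
  have hnodup : p.support.Nodup := by
    rw [hsup]
    exact List.Nodup.map_on
      (fun c hc d hd hcd => hinj c d (hLmem c hc).1 (hLmem c hc).2
        (hLmem d hd).1 (hLmem d hd).2 hcd) hLnd
  have hpath : p.IsPath := (SimpleGraph.Walk.isPath_def p).mpr hnodup
  have hedge : s(x a, x 1) ∉ p.edges := by
    intro h
    rw [hp, SimpleGraph.Walk.edges_append, SimpleGraph.Walk.edges_cons,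
      SimpleGraph.Walk.edges_reverse, hw1e, hw2e] at h
    simp only [List.mem_append, List.mem_cons, List.mem_reverse, List.mem_map,
      List.mem_range, Sym2.eq_iff] at h
    rcases h with ⟨d, hd, h⟩ | (h | ⟨d, hd, h⟩)
    · rcases h with ⟨h1, h2⟩ | ⟨h1, h2⟩
      · have := hinj (1 + d) a (by omega) (by omega) (by omega) (by omega) h1
        have := hinj (1 + d + 1) 1 (by omega) (by omega) (by omega) (by omega) h2
        omega
      · have := hinj (1 + d) 1 (by omega) (by omega) (by omega) (by omega) h1
        have := hinj (1 + d + 1) a (by omega) (by omega) (by omega) (by omega) h2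
        omega
    · rcases h with ⟨h1, h2⟩ | ⟨h1, h2⟩
      · have := hinj a (1 + t') (by omega) (by omega) (by omega) (by omega) h1
        have := hinj 1 (a + e) (by omega) (by omega) (by omega) (by omega) h2
        omega
      · have := hinj a (a + e) (by omega) (by omega) (by omega) (by omega) h1
        have := hinj 1 (1 + t') (by omega) (by omega) (by omega) (by omega) h2
        omega
    · rcases h with ⟨h1, h2⟩ | ⟨h1, h2⟩
      · have := hinj (a + d) a (by omega) (by omega) (by omega) (by omega) h1
        have := hinj (a + d + 1) 1 (by omega) (by omega) (by omega) (by omega) h2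
        omega
      · have := hinj (a + d) 1 (by omega) (by omega) (by omega) (by omega) h1
        have := hinj (a + d + 1) a (by omega) (by omega) (by omega) (by omega) h2
        omega
  have hcycle : (SimpleGraph.Walk.cons hadj1.symm p).IsCycle :=
    SimpleGraph.Path.cons_isCycle ⟨p, hpath⟩ hadj1.symm hedge
  have hlen := hcyc (x a) _ hcycle
  rw [SimpleGraph.Walk.length_cons, hp, SimpleGraph.Walk.length_append,
    SimpleGraph.Walk.length_cons, SimpleGraph.Walk.length_reverse, hw1l, hw2l] at hlen
  omega

private lemma iter_eq {V : Type*} {G : SimpleGraph V} {x : ℕ → V} {m : ℕ}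
    (hP : IsIndexedPath G x m) (i : ℕ) :
    iterNbrSucc G x m i =
      {v | ∃ t, 1 ≤ t ∧ t + i ≤ m ∧ G.Adj (x m) (x t) ∧ v = x (t + i)} := by
  induction i with
  | zero =>
    ext v
    simp only [iterNbrSucc, Function.iterate_zero, id, pathNbrs, pathVerts,
      Set.mem_setOf_eq]
    constructor
    · rintro ⟨⟨t, h1, h2, rfl⟩, hadj⟩
      exact ⟨t, h1, by omega, hadj, rfl⟩
    · rintro ⟨t, h1, h2, hadj, rfl⟩
      exact ⟨⟨t, h1, by omega, rfl⟩, hadj⟩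
  | succ i ih =>
    have hstep : iterNbrSucc G x m (i + 1) = succStep x m (iterNbrSucc G x m i) := by
      simp only [iterNbrSucc, Function.iterate_succ_apply']
    rw [hstep, ih]
    ext v
    simp only [succStep, Set.mem_setOf_eq]
    constructor
    · rintro ⟨q, hq1, hqm, ⟨t, ht1, htm, hadj, hxq⟩, rfl⟩
      have hqt : q = t + i := hP.1 q (t + i) hq1 (by omega) (by omega) (by omega) hxq
      exact ⟨t, ht1, by omega, hadj, by rw [hqt, Nat.add_assoc]⟩
    · rintro ⟨t, ht1, htm, hadj, rfl⟩
      exact ⟨t + i, by omega, by omega, ⟨t, ht1, by omega, hadj, rfl⟩, rfl⟩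

/-- Neighbourhood structure of `x₁` on a crossing path (Claim 3.3). -/
theorem stmt_5 (k ℓ : ℕ) (hk : 5 ≤ k) (hℓ : ℓ = (k - 1) / 2)
    {V : Type*} [Fintype V] (G : SimpleGraph V) (hcyc : NoCycleGE G k)
    (x : ℕ → V) (m : ℕ) (hP : IsIndexedPath G x m) (hmk : k ≤ m)
    (hcross : ∃ i j, CrossPair G x m i j)
    (hd1 : ℓ ≤ (pathNbrs G x m (x 1)).ncard)
    (hdm : ℓ ≤ (pathNbrs G x m (x m)).ncard)
    (W : Set V)
    (hW : W = pathVerts x m \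
      ((⋃ i ∈ Finset.Icc 1 (m - k + 1), iterNbrSucc G x m i) ∪ {x 1})) :
    (Even k → {v ∈ W | ¬G.Adj (x 1) v}.ncard ≤ 1 ∧
      ((pathNbrs G x m (x 1)).ncard = W.ncard → ∀ v ∈ W, G.Adj (x 1) v)) ∧
    (Odd k → ∀ v ∈ W, G.Adj (x 1) v) := by
  classical
  have hinj := hP.1
  set r : ℕ := m - k + 1 with hr
  set Tidx : Finset ℕ := (Finset.Icc 1 (m - 1)).filter (fun t => G.Adj (x m) (x t)) with hT
  set Aidx : Finset ℕ := (Finset.Icc 2 m).filter (fun s => G.Adj (x 1) (x s)) with hA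
  set Uidx : Finset ℕ := (Finset.Icc 2 m).filter
      (fun s => ∃ t ∈ Tidx, t < s ∧ s ≤ t + r) with hU
  set Widx : Finset ℕ := (Finset.Icc 2 m) \ Uidx with hWi
  have hTmem : ∀ t, t ∈ Tidx ↔ (1 ≤ t ∧ t ≤ m - 1 ∧ G.Adj (x m) (x t)) := by
    intro t; rw [hT, Finset.mem_filter, Finset.mem_Icc, and_assoc]
  have hAmem : ∀ s, s ∈ Aidx ↔ (2 ≤ s ∧ s ≤ m ∧ G.Adj (x 1) (x s)) := by
    intro s; rw [hA, Finset.mem_filter, Finset.mem_Icc, and_assoc]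
  have hUmem : ∀ s, s ∈ Uidx ↔ (2 ≤ s ∧ s ≤ m ∧ ∃ t ∈ Tidx, t < s ∧ s ≤ t + r) := by
    intro s; rw [hU, Finset.mem_filter, Finset.mem_Icc, and_assoc]
  have hWmem : ∀ s, s ∈ Widx ↔ (2 ≤ s ∧ s ≤ m ∧ s ∉ Uidx) := by
    intro s; rw [hWi, Finset.mem_sdiff, Finset.mem_Icc, and_assoc]
  have himg : ∀ (F : Finset ℕ), (∀ c ∈ F, 1 ≤ c ∧ c ≤ m) → ((x '' ↑F).ncard = F.card) := by
    intro F hF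
    rw [Set.ncard_image_of_injOn, Set.ncard_coe_finset]
    intro c hc d hd hcd
    have hc' := hF c (Finset.mem_coe.mp hc)
    have hd' := hF d (Finset.mem_coe.mp hd)
    exact hinj c d hc'.1 hc'.2 hd'.1 hd'.2 hcd
  -- the three index-set descriptions
  have hTset : pathNbrs G x m (x m) = x '' ↑Tidx := by
    ext v
    constructor
    · rintro ⟨⟨i, h1, h2, rfl⟩, hadj⟩
      have him : i ≠ m := by rintro rfl; exact G.irrefl hadj
      exact ⟨i, Finset.mem_coe.mpr ((hTmem i).mpr ⟨h1, by omega, hadj⟩), rfl⟩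
    · rintro ⟨i, hi, rfl⟩
      obtain ⟨h1, h2, hadj⟩ := (hTmem i).mp (Finset.mem_coe.mp hi)
      exact ⟨⟨i, h1, by omega, rfl⟩, hadj⟩
  have hAset : pathNbrs G x m (x 1) = x '' ↑Aidx := by
    ext v
    constructor
    · rintro ⟨⟨i, h1, h2, rfl⟩, hadj⟩
      have him : i ≠ 1 := by rintro rfl; exact G.irrefl hadj
      exact ⟨i, Finset.mem_coe.mpr ((hAmem i).mpr ⟨by omega, h2, hadj⟩), rfl⟩
    · rintro ⟨i, hi, rfl⟩
      obtain ⟨h1, h2, hadj⟩ := (hAmem i).mp (Finset.mem_coe.mp hi)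
      exact ⟨⟨i, by omega, h2, rfl⟩, hadj⟩
  have hWset : W = x '' ↑Widx := by
    rw [hW]
    ext v
    constructor
    · rintro ⟨⟨s, h1, h2, rfl⟩, hnot⟩
      have hs1 : s ≠ 1 := by rintro rfl; exact hnot (Or.inr rfl)
      have hsU : s ∉ Uidx := by
        intro hsU
        obtain ⟨-, -, t, htT, hts, hstr⟩ := (hUmem s).mp hsU
        obtain ⟨ht1, htm, hadjt⟩ := (hTmem t).mp htT
        apply hnot
        left
        refine Set.mem_iUnion₂.mpr ⟨s - t, Finset.mem_Icc.mpr ⟨by omega, by omega⟩, ?_⟩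
        rw [iter_eq hP]
        exact ⟨t, ht1, by omega, hadjt, by congr 1; omega⟩
      exact ⟨s, Finset.mem_coe.mpr ((hWmem s).mpr ⟨by omega, h2, hsU⟩), rfl⟩
    · rintro ⟨s, hs, rfl⟩
      obtain ⟨hs2, hsm, hsU⟩ := (hWmem s).mp (Finset.mem_coe.mp hs)
      refine ⟨⟨s, by omega, hsm, rfl⟩, ?_⟩
      rintro (hbig | hone)
      · obtain ⟨i, hi, hmem⟩ := Set.mem_iUnion₂.mp hbig
        rw [iter_eq hP] at hmem
        obtain ⟨t, ht1, htim, hadjt, hxe⟩ := hmem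
        obtain ⟨hi1, hi2⟩ := Finset.mem_Icc.mp hi
        have hst : s = t + i := hinj s (t + i) (by omega) hsm (by omega) htim hxe
        apply hsU
        refine (hUmem s).mpr ⟨hs2, hsm, t, (hTmem t).mpr ⟨ht1, by omega, hadjt⟩,
          by omega, by omega⟩
      · have h1 : x s = x 1 := hone
        have : s = 1 := hinj s 1 (by omega) hsm (by omega) (by omega) h1
        omega
  -- crossing pair in indices
  obtain ⟨ic, jc, hic1, hicjc, hjcm, hadjmc, hadj1c⟩ := hcross
  have hicT : ic ∈ Tidx := (hTmem ic).mpr ⟨hic1, by omega, hadjmc⟩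
  have hjcA : jc ∈ Aidx := (hAmem jc).mpr ⟨by omega, hjcm, hadj1c⟩
  -- the crossing-gap constraint
  have hC3 : ∀ t ∈ Tidx, ∀ a ∈ Aidx, t < a → t + r < a := by
    intro t htT a haA hta
    obtain ⟨ht1, htm, hadjt⟩ := (hTmem t).mp htT
    obtain ⟨ha2, ham, hadja⟩ := (hAmem a).mp haA
    exact cross_gap hcyc hP hk hmk ht1 hta ham hadjt hadja
  have hAW : Aidx ⊆ Widx := by
    intro a haA
    obtain ⟨ha2, ham, hadja⟩ := (hAmem a).mp haA
    refine (hWmem a).mpr ⟨ha2, ham, fun haU => ?_⟩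
    obtain ⟨-, -, t, htT, hts, hstr⟩ := (hUmem a).mp haU
    exact absurd (hC3 t htT a haA hts) (by omega)
  -- the maximal T-element below jc
  have hSne : (Tidx.filter (fun t => t < jc)).Nonempty :=
    ⟨ic, Finset.mem_filter.mpr ⟨hicT, by omega⟩⟩
  obtain ⟨t0, ht0mem, ht0max'⟩ : ∃ t0 ∈ Tidx.filter (fun u => u < jc),
      ∀ t ∈ Tidx.filter (fun u => u < jc), t ≤ t0 :=
    ⟨_, Finset.max'_mem _ hSne, fun t ht => Finset.le_max' _ t ht⟩
  have ht0T : t0 ∈ Tidx := (Finset.mem_filter.mp ht0mem).1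
  have ht0lt : t0 < jc := (Finset.mem_filter.mp ht0mem).2
  have ht0max : ∀ t ∈ Tidx, t < jc → t ≤ t0 := fun t ht hlt =>
    ht0max' t (Finset.mem_filter.mpr ⟨ht, hlt⟩)
  obtain ⟨ht01, ht0m, -⟩ := (hTmem t0).mp ht0T
  have hgap : t0 + r < jc := hC3 t0 ht0T jc hjcA ht0lt
  have hr1 : 1 ≤ r := by omega
  -- lower bound on |Uidx|
  have hUsub : (Tidx.image (· + 1)) ∪ Finset.Icc (t0 + 2) (t0 + r) ⊆ Uidx := by
    intro s hs
    rcases Finset.mem_union.mp hs with hs | hs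
    · obtain ⟨t, htT, rfl⟩ := Finset.mem_image.mp hs
      obtain ⟨ht1, htm, hadjt⟩ := (hTmem t).mp htT
      exact (hUmem _).mpr ⟨by omega, by omega, t, htT, by omega, by omega⟩
    · have hs' := Finset.mem_Icc.mp hs
      exact (hUmem _).mpr ⟨by omega, by omega, t0, ht0T, by omega, by omega⟩
  have hdisj : Disjoint (Tidx.image (· + 1)) (Finset.Icc (t0 + 2) (t0 + r)) := by
    rw [Finset.disjoint_left]
    rintro s hs1 hs2
    obtain ⟨t, htT, rfl⟩ := Finset.mem_image.mp hs1
    have hs' := Finset.mem_Icc.mp hs2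
    have : t ≤ t0 := ht0max t htT (by omega)
    omega
  have hcardU : Tidx.card + (r - 1) ≤ Uidx.card := by
    have h1 := Finset.card_le_card hUsub
    rw [Finset.card_union_of_disjoint hdisj,
      Finset.card_image_of_injective _ (add_left_injective 1),
      Nat.card_Icc] at h1
    omega
  have hUIcc : Uidx ⊆ Finset.Icc 2 m := Finset.filter_subset _ _
  have hcardW : Widx.card = (m + 1 - 2) - Uidx.card := by
    rw [hWi, Finset.card_sdiff_of_subset hUIcc, Nat.card_Icc]
  have hcardU2 : Uidx.card ≤ m + 1 - 2 := by
    have h2 := Finset.card_le_card hUIcc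
    rwa [Nat.card_Icc] at h2
  -- translate the degree hypotheses
  have hTcard : ℓ ≤ Tidx.card := by
    have h := hdm
    rw [hTset, himg Tidx (fun c hc => by have := (hTmem c).mp hc; omega)] at h
    exact h
  have hAeq : (pathNbrs G x m (x 1)).ncard = Aidx.card := by
    rw [hAset, himg Aidx (fun c hc => by have := (hAmem c).mp hc; omega)]
  have hAcard : ℓ ≤ Aidx.card := by rw [hAeq] at hd1; exact hd1
  have hWb : ∀ c ∈ Widx, 1 ≤ c ∧ c ≤ m := fun c hc => by
    have := (hWmem c).mp hc; omega
  have hWcard' : W.ncard = Widx.card := by rw [hWset]; exact himg Widx hWb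
  have hbadset : {v ∈ W | ¬G.Adj (x 1) v} = x '' ↑(Widx \ Aidx) := by
    ext v
    constructor
    · rintro ⟨hvW, hnadj⟩
      rw [hWset] at hvW
      obtain ⟨s, hs, rfl⟩ := hvW
      have hsW : s ∈ Widx := Finset.mem_coe.mp hs
      obtain ⟨hs2, hsm, -⟩ := (hWmem s).mp hsW
      exact ⟨s, Finset.mem_coe.mpr (Finset.mem_sdiff.mpr
        ⟨hsW, fun hsA => hnadj ((hAmem s).mp hsA).2.2⟩), rfl⟩
    · rintro ⟨s, hs, rfl⟩
      obtain ⟨hsW, hsA⟩ := Finset.mem_sdiff.mp (Finset.mem_coe.mp hs)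
      obtain ⟨hs2, hsm, -⟩ := (hWmem s).mp hsW
      exact ⟨by rw [hWset]; exact ⟨s, Finset.mem_coe.mpr hsW, rfl⟩,
        fun hadj => hsA ((hAmem s).mpr ⟨hs2, hsm, hadj⟩)⟩
  have hbadcard : {v ∈ W | ¬G.Adj (x 1) v}.ncard = Widx.card - Aidx.card := by
    rw [hbadset, himg _ (fun c hc => hWb c (Finset.mem_sdiff.mp hc).1),
      Finset.card_sdiff_of_subset hAW]
  have hallAdj : Aidx = Widx → ∀ v ∈ W, G.Adj (x 1) v := by
    intro hEq v hvW
    rw [hWset] at hvW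
    obtain ⟨s, hs, rfl⟩ := hvW
    have hsW : s ∈ Widx := Finset.mem_coe.mp hs
    rw [← hEq] at hsW
    exact ((hAmem s).mp hsW).2.2
  have hk2 : Widx.card + Tidx.card ≤ k - 1 := by omega
  refine ⟨fun hke => ⟨?_, ?_⟩, fun hko => ?_⟩
  · have hke' := Nat.even_iff.mp hke
    rw [hbadcard]
    omega
  · intro hEqcard
    rw [hAeq, hWcard'] at hEqcard
    exact hallAdj (Finset.eq_of_subset_of_card_le hAW (by omega))
  · have hko' := Nat.odd_iff.mp hko
    exact hallAdj (Finset.eq_of_subset_of_card_le hAW (by omega))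
end

section
/- Let k ≥ 5 be an integer and ℓ = ⌊(k-1)/2⌋. Let G be a 2-connected simple graph containing no cycle of length at least k, suppose the (ℓ-1)-disintegration H = H(G,ℓ-1) is non-empty, and let P = x₁x₂⋯x_m be a crossing H-path of G with the maximum number of vertices among all H-paths, where m ≥ k. Let (i,j) be a minimal crossing pair of P, and let s = s_P and t = t_P. If x_s ∈ V(H) and x_{s+1} ∈ N_P(x₁), then there is no index q with j ≤ q ≤ t-2 such that x₁ is adjacent to both x_q and x_{q+1}. Similarly, if x_t ∈ V(H) and x_{t-1} ∈ N_P(x_m), then there is no index q with s+1 ≤ q ≤ i-1 such that x_m is adjacent to both x_q and x_{q+1}. -/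
open SimpleGraph

variable {V : Type*}

namespace ClaimAux

lemma walk_of_sigma {G : SimpleGraph V} (y : ℕ → V) (σ : ℕ → ℕ)
    (n : ℕ) (hadj : ∀ c, c + 1 ≤ n → G.Adj (y (σ c)) (y (σ (c + 1)))) :
    ∃ w : G.Walk (y (σ 0)) (y (σ n)),
      w.support = (List.range (n + 1)).map (fun c => y (σ c)) ∧ w.length = n := by
  induction n with
  | zero => exact ⟨Walk.nil, by simp [List.range_succ], rfl⟩
  | succ n ih =>
    obtain ⟨w, hsup, hlen⟩ := ih (fun c hc => hadj c (by omega))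
    refine ⟨w.concat (hadj n (by omega)), ?_, ?_⟩
    · rw [Walk.support_concat, hsup]
      have hr : List.range (n + 1 + 1) = List.range n ++ [n, n + 1] := by
        rw [List.range_succ, List.range_succ]; simp
      rw [hr]
      simp [List.range_succ]
    · rw [Walk.length_concat, hlen]

lemma edge_not_mem_path {G : SimpleGraph V} {u v : V} (p : G.Walk u v) (hp : p.IsPath)
    (hlen : 2 ≤ p.length) : s(v, u) ∉ p.edges := by
  intro hmem
  cases p with
  | nil => simp at hlen
  | cons h' p' =>
    rename_i c
    rw [Walk.edges_cons, List.mem_cons] at hmem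
    have hnd := (Walk.isPath_def _).mp hp
    rw [Walk.support_cons, List.nodup_cons] at hnd
    rcases hmem with h1 | h2
    · have hvc : v = c := by
        rw [Sym2.eq_iff] at h1
        rcases h1 with ⟨h, h2⟩ | ⟨h, h2⟩
        · exact h.trans h2
        · exact h
      subst hvc
      have : p'.IsPath := hp.of_cons
      have : p' = Walk.nil := Walk.isPath_iff_eq_nil.mp this
      subst this
      simp at hlen
    · exact hnd.1 (p'.snd_mem_support_of_mem_edges h2)

lemma kill_cycle {G : SimpleGraph V} {y : ℕ → V} {m k : ℕ} (hcyc : NoCycleGE G k)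
    (hP : IsIndexedPath G y m)
    (hk : 5 ≤ k) (σ : ℕ → ℕ) (L : ℕ) (hL : k ≤ L)
    (hmem : ∀ c, c < L → 1 ≤ σ c ∧ σ c ≤ m)
    (hinj : ∀ c, c < L → ∀ c', c' < L → σ c = σ c' → c = c')
    (hadj : ∀ c, c + 1 < L → G.Adj (y (σ c)) (y (σ (c + 1))))
    (hclose : G.Adj (y (σ (L - 1))) (y (σ 0))) : False := by
  obtain ⟨w, hsup, hlen⟩ := walk_of_sigma (G := G) y σ (L - 1)
    (fun c hc => hadj c (by omega))
  have hpath : w.IsPath := by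
    rw [Walk.isPath_def, hsup]
    refine List.Nodup.map_on ?_ List.nodup_range
    intro a ha b hb hy
    rw [List.mem_range] at ha hb
    have h1 := hmem a (by omega)
    have h2 := hmem b (by omega)
    exact hinj a (by omega) b (by omega)
      (hP.1 _ _ h1.1 h1.2 h2.1 h2.2 hy)
  have hnotmem := edge_not_mem_path w hpath (by omega)
  have hcycle : (Walk.cons hclose w).IsCycle := by
    rw [Walk.cons_isCycle_iff]
    exact ⟨hpath, hnotmem⟩
  have := hcyc _ _ hcycle
  rw [Walk.length_cons, hlen] at this
  omega

lemma kill_cycle' {G : SimpleGraph V} {y : ℕ → V} {m k : ℕ} (hcyc : NoCycleGE G k)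
    (hP : IsIndexedPath G y m)
    (hk : 5 ≤ k) (σ : ℕ → ℕ) (L : ℕ) (hL : k ≤ L)
    (hmem : ∀ c, c < L → 1 ≤ σ c ∧ σ c ≤ m)
    (hinj : ∀ c, c < L → ∀ c', c' < L → σ c = σ c' → c = c')
    (hstep : ∀ c, c + 1 < L →
      (σ (c + 1) = σ c + 1) ∨ (σ c = σ (c + 1) + 1) ∨ G.Adj (y (σ c)) (y (σ (c + 1))))
    (hclose : (σ 0 = σ (L - 1) + 1) ∨ (σ (L - 1) = σ 0 + 1) ∨
      G.Adj (y (σ (L - 1))) (y (σ 0))) : False := by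
  have hadj : ∀ c, c + 1 < L → G.Adj (y (σ c)) (y (σ (c + 1))) := by
    intro c hc
    rcases hstep c hc with h | h | h
    · have h1 := hmem c (by omega)
      have h2 := hmem (c + 1) (by omega)
      rw [h]
      exact hP.2 (σ c) h1.1 (by omega)
    · have h1 := hmem c (by omega)
      have h2 := hmem (c + 1) (by omega)
      rw [h]
      exact (hP.2 (σ (c + 1)) h2.1 (by omega)).symm
    · exact h
  have hcl : G.Adj (y (σ (L - 1))) (y (σ 0)) := by
    rcases hclose with h | h | h
    · have h1 := hmem 0 (by omega)
      have h2 := hmem (L - 1) (by omega)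
      rw [h]
      exact hP.2 (σ (L - 1)) h2.1 (by omega)
    · have h1 := hmem 0 (by omega)
      have h2 := hmem (L - 1) (by omega)
      rw [h]
      exact (hP.2 (σ 0) h1.1 (by omega)).symm
    · exact h
  exact kill_cycle hcyc hP hk σ L hL hmem hinj hadj hcl

set_option maxHeartbeats 1600000 in
/-- The core of Claim 3.4: from a maximum `H`-path with the listed chords and
`y s, y m ∈ D` of `D`-degree at least `ℓ`, derive a contradiction. -/
lemma main {G : SimpleGraph V} {y : ℕ → V} {D : Set V} {m k ℓ s q : ℕ}
    (hk : 5 ≤ k) (hl : ℓ = (k - 1) / 2) (hD : D = disint G (ℓ - 1))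
    (hcyc : NoCycleGE G k) (hmk : k ≤ m)
    (hP : IsIndexedPath G y m)
    (hy1 : y 1 ∈ D) (hym : y m ∈ D) (hys : y s ∈ D)
    (hmax : ∀ (z : ℕ → V) (m' : ℕ), IsIndexedPath G z m' → z 1 ∈ D → z m' ∈ D → m' ≤ m)
    (hs1 : s + 1 ≤ m) (hadj1 : G.Adj (y 1) (y (s + 1))) (hs2 : G.Adj (y (s + 1)) (y m))
    (hsmin : ∀ h, h + 1 ≤ m → G.Adj (y (h + 1)) (y m) → s ≤ h)
    (hsq : s + 2 ≤ q) (hq1 : q + 1 ≤ m)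
    (hadjq : G.Adj (y 1) (y q)) (hadjq1 : G.Adj (y 1) (y (q + 1))) : False := by
  classical
  have hs0 : 1 ≤ s := by
    by_contra h
    have : s = 0 := by omega
    subst this
    exact G.irrefl hadj1
  have hl2 : 2 ≤ ℓ := by omega
  have hPa : ∀ a b, 1 ≤ a → b = a + 1 → b ≤ m → G.Adj (y a) (y b) := by
    intro a b h1 h2 h3; subst h2; exact hP.2 a h1 (by omega)
  have hPs : ∀ a b, 1 ≤ b → a = b + 1 → a ≤ m → G.Adj (y a) (y b) := by
    intro a b h1 h2 h3; subst h2; exact (hP.2 b h1 (by omega)).symm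
  -- base cycle bound: q ≥ s + (m - k) + 2
  have hq0 : s + (m - k) + 2 ≤ q := by
    by_contra hcon
    refine kill_cycle' hcyc hP hk
      (fun c => if c + 1 ≤ s + 1 then c + 1 else m + (s + 1) - c)
      (s + 1 + (m - q)) (by omega) ?_ ?_ ?_ ?_
    · intro c hc; beta_reduce; split_ifs <;> omega
    · intro c hc c' hc' h; beta_reduce at h; split_ifs at h <;> omega
    · intro c hc
      beta_reduce
      split_ifs <;>
        first
          | omega
          | (refine Or.inr (Or.inr ?_);
             first
               | (convert hadj1 using 2 <;> omega)
               | (convert hs2 using 2 <;> omega)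
               | (convert hadjq1.symm using 2 <;> omega))
    · beta_reduce
      split_ifs <;>
        first
          | omega
          | (refine Or.inr (Or.inr ?_);
             first
               | (convert hadj1 using 2 <;> omega)
               | (convert hs2 using 2 <;> omega)
               | (convert hadjq1.symm using 2 <;> omega))
  -- L1
  have L1 : ∀ p, s + 1 ≤ p → p + 1 ≤ m → G.Adj (y m) (y p) → G.Adj (y s) (y (p + 1)) → False := by
    intro p hp1 hp2 hmp hsp
    refine kill_cycle' hcyc hP hk
      (fun c => if c + 1 ≤ s then s - c else if c + 1 ≤ p then c + 1 else m + p - c) m hmk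
      ?_ ?_ ?_ ?_
    · intro c hc; beta_reduce; split_ifs <;> omega
    · intro c hc c' hc' h; beta_reduce at h; split_ifs at h <;> omega
    · intro c hc
      beta_reduce
      split_ifs <;>
        first
          | omega
          | (refine Or.inr (Or.inr ?_);
             first
               | (convert hadj1 using 2 <;> omega)
               | (convert hmp.symm using 2 <;> omega)
               | (convert hsp.symm using 2 <;> omega))
    · beta_reduce
      split_ifs <;>
        first
          | omega
          | (refine Or.inr (Or.inr ?_);
             first
               | (convert hadj1 using 2 <;> omega)
               | (convert hmp.symm using 2 <;> omega)
               | (convert hsp.symm using 2 <;> omega))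
  -- L2
  have L2 : ∀ p, s + 1 ≤ p → p + 1 ≤ m → G.Adj (y 1) (y p) → G.Adj (y s) (y (p + 1)) → False := by
    intro p hp1 hp2 h1p hsp
    refine kill_cycle' hcyc hP hk
      (fun c => if c + 1 ≤ s then s - c else if c + 1 ≤ p then p + s - c else m + p - c) m hmk
      ?_ ?_ ?_ ?_
    · intro c hc; beta_reduce; split_ifs <;> omega
    · intro c hc c' hc' h; beta_reduce at h; split_ifs at h <;> omega
    · intro c hc
      beta_reduce
      split_ifs <;>
        first
          | omega
          | (refine Or.inr (Or.inr ?_);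
             first
               | (convert h1p using 2 <;> omega)
               | (convert hs2 using 2 <;> omega)
               | (convert hsp.symm using 2 <;> omega))
    · beta_reduce
      split_ifs <;>
        first
          | omega
          | (refine Or.inr (Or.inr ?_);
             first
               | (convert h1p using 2 <;> omega)
               | (convert hs2 using 2 <;> omega)
               | (convert hsp.symm using 2 <;> omega))
  -- L3 (Hamiltonian)
  have L3 : ∀ p, 1 ≤ p → p + 1 ≤ m → G.Adj (y m) (y p) → G.Adj (y 1) (y (p + 1)) → False := by
    intro p hp1 hp2 hmp h1p
    refine kill_cycle' hcyc hP hk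
      (fun c => if c + 1 ≤ p then c + 1 else m + p - c) m hmk ?_ ?_ ?_ ?_
    · intro c hc; beta_reduce; split_ifs <;> omega
    · intro c hc c' hc' h; beta_reduce at h; split_ifs at h <;> omega
    · intro c hc
      beta_reduce
      split_ifs <;>
        first
          | omega
          | (refine Or.inr (Or.inr ?_);
             first
               | (convert hmp.symm using 2 <;> omega)
               | (convert h1p.symm using 2 <;> omega))
    · beta_reduce
      split_ifs <;>
        first
          | omega
          | (refine Or.inr (Or.inr ?_);
             first
               | (convert hmp.symm using 2 <;> omega)
               | (convert h1p.symm using 2 <;> omega))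
  -- L4
  have L4 : ∀ p, 1 ≤ p → p < q → q ≤ p + (m - k) + 1 → G.Adj (y m) (y p) → False := by
    intro p hp1 hp2 hp3 hmp
    refine kill_cycle' hcyc hP hk
      (fun c => if c + 1 ≤ p then c + 1 else m + p - c) (p + (m - q) + 1) (by omega) ?_ ?_ ?_ ?_
    · intro c hc; beta_reduce; split_ifs <;> omega
    · intro c hc c' hc' h; beta_reduce at h; split_ifs at h <;> omega
    · intro c hc
      beta_reduce
      split_ifs <;>
        first
          | omega
          | (refine Or.inr (Or.inr ?_);
             first
               | (convert hmp.symm using 2 <;> omega)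
               | (convert hadjq.symm using 2 <;> omega))
    · beta_reduce
      split_ifs <;>
        first
          | omega
          | (refine Or.inr (Or.inr ?_);
             first
               | (convert hmp.symm using 2 <;> omega)
               | (convert hadjq.symm using 2 <;> omega))
  -- L5
  have L5 : ∀ r, s + 2 ≤ r → r < q → q ≤ r + (m - k) → G.Adj (y s) (y r) → False := by
    intro r hr1 hr2 hr3 hsr
    refine kill_cycle' hcyc hP hk
      (fun c => if c + 1 ≤ s then c + 1 else if c + 1 ≤ r then r + s - c else m + r - c)
      (r + (m - q)) (by omega) ?_ ?_ ?_ ?_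
    · intro c hc; beta_reduce; split_ifs <;> omega
    · intro c hc c' hc' h; beta_reduce at h; split_ifs at h <;> omega
    · intro c hc
      beta_reduce
      split_ifs <;>
        first
          | omega
          | (refine Or.inr (Or.inr ?_);
             first
               | (convert hsr using 2 <;> omega)
               | (convert hs2 using 2 <;> omega)
               | (convert hadjq1.symm using 2 <;> omega))
    · beta_reduce
      split_ifs <;>
        first
          | omega
          | (refine Or.inr (Or.inr ?_);
             first
               | (convert hsr using 2 <;> omega)
               | (convert hs2 using 2 <;> omega)
               | (convert hadjq1.symm using 2 <;> omega))
  -- L7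
  have L7 : G.Adj (y s) (y q) → False := by
    intro hsq7
    refine kill_cycle' hcyc hP hk
      (fun c => if c + 1 ≤ s then s - c else if c + 1 ≤ s + (m - q) then q + 1 + (c - s)
        else c + q + 1 - m) m hmk ?_ ?_ ?_ ?_
    · intro c hc; beta_reduce; split_ifs <;> omega
    · intro c hc c' hc' h; beta_reduce at h; split_ifs at h <;> omega
    · intro c hc
      beta_reduce
      split_ifs <;>
        first
          | omega
          | (refine Or.inr (Or.inr ?_);
             first
               | (convert hadjq1 using 2 <;> omega)
               | (convert hs2.symm using 2 <;> omega)
               | (convert hsq7.symm using 2 <;> omega))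
    · beta_reduce
      split_ifs <;>
        first
          | omega
          | (refine Or.inr (Or.inr ?_);
             first
               | (convert hadjq1 using 2 <;> omega)
               | (convert hs2.symm using 2 <;> omega)
               | (convert hsq7.symm using 2 <;> omega))
  -- every D-neighbour of y m lies on the path
  have hEm : ∀ u, u ∈ D → G.Adj (y m) u → ∃ p, 1 ≤ p ∧ p ≤ m ∧ y p = u := by
    intro u huD hadju
    by_contra hcon
    push_neg at hcon
    have hIP : IsIndexedPath G (fun h => if h ≤ m then y h else u) (m + 1) := by
      constructor
      · intro a b ha1 ha2 hb1 hb2 hab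
        beta_reduce at hab
        split_ifs at hab with h1 h2 h2
        · exact hP.1 a b ha1 h1 hb1 h2 hab
        · exact absurd hab (hcon a ha1 h1)
        · exact absurd hab.symm (hcon b hb1 h2)
        · omega
      · intro a ha1 ha2
        beta_reduce
        split_ifs with h1 h2 h2
        · exact hP.2 a ha1 (by omega)
        · have haem : a = m := by omega
          subst haem
          exact hadju
        · omega
        · omega
    have h1D : (fun h => if h ≤ m then y h else u) 1 ∈ D := by
      beta_reduce
      rw [if_pos (by omega : 1 ≤ m)]
      exact hy1
    have h2D : (fun h => if h ≤ m then y h else u) (m + 1) ∈ D := by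
      beta_reduce
      rw [if_neg (by omega : ¬ m + 1 ≤ m)]
      exact huD
    have := hmax _ (m + 1) hIP h1D h2D
    omega
  -- every D-neighbour of y s lies on the path
  have hEs : ∀ u, u ∈ D → G.Adj (y s) u → ∃ p, 1 ≤ p ∧ p ≤ m ∧ y p = u := by
    intro u huD hadju
    by_contra hcon
    push_neg at hcon
    have hIP : IsIndexedPath G
        (fun h => if h ≤ 1 then u else if h ≤ s + 1 then y (s + 2 - h) else y (h - 1)) (m + 1) := by
      constructor
      · intro a b ha1 ha2 hb1 hb2 hab
        beta_reduce at hab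
        split_ifs at hab with h1 h2 h2 h3 h4 h4 h5 h5
        · omega
        · exact absurd hab (hcon (s + 2 - b) (by omega) (by omega)).symm
        · exact absurd hab (hcon (b - 1) (by omega) (by omega)).symm
        · exact absurd hab.symm (hcon (s + 2 - a) (by omega) (by omega)).symm
        · have := hP.1 _ _ (by omega : 1 ≤ s + 2 - a) (by omega : s + 2 - a ≤ m)
            (by omega : 1 ≤ s + 2 - b) (by omega : s + 2 - b ≤ m) hab
          omega
        · have := hP.1 _ _ (by omega : 1 ≤ s + 2 - a) (by omega : s + 2 - a ≤ m)
            (by omega : 1 ≤ b - 1) (by omega : b - 1 ≤ m) hab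
          omega
        · exact absurd hab.symm (hcon (a - 1) (by omega) (by omega)).symm
        · have := hP.1 _ _ (by omega : 1 ≤ a - 1) (by omega : a - 1 ≤ m)
            (by omega : 1 ≤ s + 2 - b) (by omega : s + 2 - b ≤ m) hab
          omega
        · have := hP.1 _ _ (by omega : 1 ≤ a - 1) (by omega : a - 1 ≤ m)
            (by omega : 1 ≤ b - 1) (by omega : b - 1 ≤ m) hab
          omega
      · intro a ha1 ha2
        beta_reduce
        split_ifs with h1 h2 h3 h3 h4 h5 h5 h6 h6 <;>
          first
            | omega
            | (first
                | (convert hadju.symm using 2 <;> omega)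
                | (convert hadj1 using 2 <;> omega)
                | (exact hPa _ _ (by omega) (by omega) (by omega))
                | (exact hPs _ _ (by omega) (by omega) (by omega)))
    have h1D : (fun h => if h ≤ 1 then u else if h ≤ s + 1 then y (s + 2 - h) else y (h - 1)) 1 ∈ D := by
      beta_reduce
      rw [if_pos (by omega : (1:ℕ) ≤ 1)]
      exact huD
    have h2D : (fun h => if h ≤ 1 then u else if h ≤ s + 1 then y (s + 2 - h) else y (h - 1)) (m + 1) ∈ D := by
      beta_reduce
      rw [if_neg (by omega : ¬ m + 1 ≤ 1), if_neg (by omega : ¬ m + 1 ≤ s + 1)]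
      have : m + 1 - 1 = m := by omega
      rw [this]
      exact hym
    have := hmax _ (m + 1) hIP h1D h2D
    omega
  -- D-degree bounds
  have hDs := hys
  rw [hD] at hDs
  simp only [disint, Set.mem_sUnion, Set.mem_setOf_eq] at hDs
  obtain ⟨S₀, hS₀, hmemS₀⟩ := hDs
  have hS₀sub : S₀ ⊆ D := by
    intro u hu
    rw [hD]
    simp only [disint, Set.mem_sUnion, Set.mem_setOf_eq]
    exact ⟨S₀, hS₀, hu⟩
  have hcardS : ℓ ≤ {u | u ∈ S₀ ∧ G.Adj (y s) u}.ncard := by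
    have := hS₀ (y s) hmemS₀
    omega
  have hDm := hym
  rw [hD] at hDm
  simp only [disint, Set.mem_sUnion, Set.mem_setOf_eq] at hDm
  obtain ⟨S₁, hS₁, hmemS₁⟩ := hDm
  have hS₁sub : S₁ ⊆ D := by
    intro u hu
    rw [hD]
    simp only [disint, Set.mem_sUnion, Set.mem_setOf_eq]
    exact ⟨S₁, hS₁, hu⟩
  have hcardM : ℓ ≤ {u | u ∈ S₁ ∧ G.Adj (y m) u}.ncard := by
    have := hS₁ (y m) hmemS₁
    omega
  -- position sets
  set A : Finset ℕ := (Finset.Icc 1 m).filter (fun p => y p ∈ S₀ ∧ G.Adj (y s) (y p)) with hA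
  set B : Finset ℕ := (Finset.Icc 1 m).filter (fun p => y p ∈ S₁ ∧ G.Adj (y m) (y p)) with hB
  have hcardA : ℓ ≤ A.card := by
    have hsub : {u | u ∈ S₀ ∧ G.Adj (y s) u} ⊆ y '' (A : Set ℕ) := by
      intro u hu
      obtain ⟨p, hp1, hp2, hp3⟩ := hEs u (hS₀sub hu.1) hu.2
      refine ⟨p, ?_, hp3⟩
      simp only [hA, Finset.coe_filter, Set.mem_setOf_eq, Finset.mem_Icc]
      rw [hp3]
      exact ⟨⟨hp1, hp2⟩, hu⟩
    calc ℓ ≤ {u | u ∈ S₀ ∧ G.Adj (y s) u}.ncard := hcardS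
    _ ≤ (y '' (A : Set ℕ)).ncard := Set.ncard_le_ncard hsub (((A : Set ℕ).toFinite).image y)
    _ ≤ (A : Set ℕ).ncard := Set.ncard_image_le ((A : Set ℕ).toFinite)
    _ = A.card := Set.ncard_coe_finset A
  have hcardB : ℓ ≤ B.card := by
    have hsub : {u | u ∈ S₁ ∧ G.Adj (y m) u} ⊆ y '' (B : Set ℕ) := by
      intro u hu
      obtain ⟨p, hp1, hp2, hp3⟩ := hEm u (hS₁sub hu.1) hu.2
      refine ⟨p, ?_, hp3⟩
      simp only [hB, Finset.coe_filter, Set.mem_setOf_eq, Finset.mem_Icc]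
      rw [hp3]
      exact ⟨⟨hp1, hp2⟩, hu⟩
    calc ℓ ≤ {u | u ∈ S₁ ∧ G.Adj (y m) u}.ncard := hcardM
    _ ≤ (y '' (B : Set ℕ)).ncard := Set.ncard_le_ncard hsub (((B : Set ℕ).toFinite).image y)
    _ ≤ (B : Set ℕ).ncard := Set.ncard_image_le ((B : Set ℕ).toFinite)
    _ = B.card := Set.ncard_coe_finset B
  have hAfact : ∀ p ∈ A, G.Adj (y s) (y p) ∧ 1 ≤ p ∧ p ≤ m := by
    intro p hp
    simp only [hA, Finset.mem_filter, Finset.mem_Icc] at hp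
    exact ⟨hp.2.2, hp.1.1, hp.1.2⟩
  have hAne : ∀ p ∈ A, p ≠ s := by
    intro p hp he
    exact G.irrefl (he ▸ (hAfact p hp).1)
  have hBfact : ∀ p ∈ B, G.Adj (y m) (y p) ∧ s + 1 ≤ p ∧ p ≤ m - 1 := by
    intro p hp
    simp only [hB, Finset.mem_filter, Finset.mem_Icc] at hp
    obtain ⟨⟨h1, h2⟩, _, hadj⟩ := hp
    have hpm : p ≠ m := by
      intro he
      exact G.irrefl (he ▸ hadj)
    have hps : s ≤ p - 1 := by
      refine hsmin (p - 1) (by omega) ?_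
      have e : p - 1 + 1 = p := by omega
      rw [e]
      exact hadj.symm
    exact ⟨hadj, by omega, by omega⟩
  -- the injection
  set f : ℕ → ℕ := fun a => if a ≤ s then a else a - 1 with hf
  set A' : Finset ℕ := A.image f with hA'
  have hcardA' : A'.card = A.card := by
    rw [hA']
    apply Finset.card_image_of_injOn
    intro a ha b hb hfe
    have h1 := hAne a ha
    have h2 := hAne b hb
    have h3 := (hAfact a ha).2.1
    have h4 := (hAfact b hb).2.1
    simp only [hf] at hfe
    split_ifs at hfe <;> omega
  have hunion : A' ∪ B ⊆ (Finset.Icc 1 (m - 1)) \ (Finset.Icc (q - (m - k) - 1) q) := by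
    intro w hw
    rw [Finset.mem_union] at hw
    rw [Finset.mem_sdiff, Finset.mem_Icc, Finset.mem_Icc]
    rcases hw with hw | hw
    · rw [hA'] at hw
      obtain ⟨a, ha, rfl⟩ := Finset.mem_image.mp hw
      obtain ⟨hadj, ha1, ha2⟩ := hAfact a ha
      have hane := hAne a ha
      have ham : a ≠ m := by
        intro he
        refine L1 (m - 1) (by omega) (by omega) ?_ ?_
        · exact (hPa (m - 1) m (by omega) (by omega) (by omega)).symm
        · have e : m - 1 + 1 = m := by omega
          rw [e, ← he]
          exact hadj
      simp only [hf]
      split_ifs with hcase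
      · exact ⟨⟨by omega, by omega⟩, by rintro ⟨hc1, hc2⟩; omega⟩
      · refine ⟨⟨by omega, by omega⟩, ?_⟩
        rintro ⟨hc1, hc2⟩
        rcases (by omega : a = q + 1 ∨ a = q ∨ (q ≤ a + (m - k) ∧ a < q)) with h | h | h
        · refine L2 q (by omega) (by omega) hadjq ?_
          rw [← h]
          exact hadj
        · exact L7 (h ▸ hadj)
        · exact L5 a (by omega) h.2 h.1 hadj
    · obtain ⟨hadj, hb1, hb2⟩ := hBfact w hw
      refine ⟨⟨by omega, by omega⟩, ?_⟩
      rintro ⟨hc1, hc2⟩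
      rcases (by omega : w = q ∨ w < q) with h | h
      · exact L3 q (by omega) (by omega) (h ▸ hadj) hadjq1
      · exact L4 w (by omega) h (by omega) hadj
  have hdisj : Disjoint A' B := by
    rw [Finset.disjoint_left]
    intro w hwA hwB
    rw [hA'] at hwA
    obtain ⟨a, ha, rfl⟩ := Finset.mem_image.mp hwA
    obtain ⟨hadj, ha1, ha2⟩ := hAfact a ha
    have hane := hAne a ha
    obtain ⟨hadjB, hb1, hb2⟩ := hBfact _ hwB
    by_cases hcase : a ≤ s
    · have hfa : f a = a := by simp [hf, hcase]
      rw [hfa] at hb1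
      omega
    · have hfa : f a = a - 1 := by simp [hf, hcase]
      rw [hfa] at hadjB hb1 hb2
      refine L1 (a - 1) hb1 (by omega) hadjB ?_
      have e : a - 1 + 1 = a := by omega
      rw [e]
      exact hadj
  have hHsub : Finset.Icc (q - (m - k) - 1) q ⊆ Finset.Icc 1 (m - 1) := by
    intro w hw
    rw [Finset.mem_Icc] at *
    omega
  have hcount : A'.card + B.card ≤ (m - 1) - ((m - k) + 2) := by
    have h1 := Finset.card_le_card hunion
    rw [Finset.card_union_of_disjoint hdisj] at h1
    rw [Finset.card_sdiff_of_subset hHsub, Nat.card_Icc, Nat.card_Icc] at h1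
    omega
  omega

end ClaimAux

/-- No two consecutive neighbours (Claim 3.4). -/
theorem stmt_6 (k ℓ : ℕ) (hk : 5 ≤ k) (hℓ : ℓ = (k - 1) / 2)
    {V : Type*} [Fintype V] (G : SimpleGraph V) (h2c : TwoConnected G)
    (hcyc : NoCycleGE G k) (D : Set V) (hD : D = disint G (ℓ - 1)) (hne : D.Nonempty)
    (x : ℕ → V) (m : ℕ) (hP : IsIndexedPath G x m) (hx1 : x 1 ∈ D) (hxm : x m ∈ D)
    (hmax : ∀ (y : ℕ → V) (m' : ℕ), IsIndexedPath G y m' → y 1 ∈ D → y m' ∈ D → m' ≤ m)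
    (hmk : k ≤ m) (i j : ℕ) (hij : MinCrossPair G x m i j)
    (s t : ℕ)
    (hs1 : s + 1 ≤ m) (hs2 : G.Adj (x (s + 1)) (x m))
    (hsmin : ∀ h, h + 1 ≤ m → G.Adj (x (h + 1)) (x m) → s ≤ h)
    (ht1 : 2 ≤ t) (ht2 : t ≤ m + 1) (ht3 : G.Adj (x (t - 1)) (x 1))
    (htmax : ∀ h, 2 ≤ h → h ≤ m + 1 → G.Adj (x (h - 1)) (x 1) → h ≤ t) :
    ((x s ∈ D ∧ G.Adj (x 1) (x (s + 1))) →
      ∀ q, j ≤ q → q ≤ t - 2 → ¬(G.Adj (x 1) (x q) ∧ G.Adj (x 1) (x (q + 1)))) ∧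
    ((x t ∈ D ∧ G.Adj (x m) (x (t - 1))) →
      ∀ q, s + 1 ≤ q → q ≤ i - 1 → ¬(G.Adj (x m) (x q) ∧ G.Adj (x m) (x (q + 1)))) := by
  constructor
  · rintro ⟨hsD, hadjs1⟩ q hjq hqt ⟨hq3, hq4⟩
    obtain ⟨⟨hi1, hij', hjm, hmi, h1j⟩, hmin⟩ := hij
    have hsi : s ≤ i - 1 := by
      refine hsmin (i - 1) (by omega) ?_
      rw [show i - 1 + 1 = i from by omega]
      exact hmi.symm
    exact ClaimAux.main hk hℓ hD hcyc hmk hP hx1 hxm hsD hmax hs1 hadjs1 hs2 hsmin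
      (by omega) (by omega) hq3 hq4
  · rintro ⟨htD, hadjt⟩ q hsq hqi ⟨hq3, hq4⟩
    obtain ⟨⟨hi1, hij', hjm, hmi, h1j⟩, hmin⟩ := hij
    have htm : t ≤ m := by
      by_contra hcon
      rw [show t - 1 = m from by omega] at hadjt
      exact G.irrefl hadjt
    have hjt : j + 1 ≤ t := by
      refine htmax (j + 1) (by omega) (by omega) ?_
      rw [show j + 1 - 1 = j from by omega]
      exact h1j.symm
    have hyP : IsIndexedPath G (fun h => x (m + 1 - h)) m := by
      constructor
      · intro a b ha1 ha2 hb1 hb2 he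
        beta_reduce at he
        have := hP.1 (m + 1 - a) (m + 1 - b) (by omega) (by omega) (by omega) (by omega) he
        omega
      · intro a ha1 ha2
        beta_reduce
        rw [show m + 1 - (a + 1) = m - a from by omega]
        have := hP.2 (m - a) (by omega) (by omega)
        rw [show m - a + 1 = m + 1 - a from by omega] at this
        exact this.symm
    refine ClaimAux.main (y := fun h => x (m + 1 - h)) (s := m + 1 - t) (q := m - q)
      hk hℓ hD hcyc hmk hyP ?_ ?_ ?_ hmax (by omega) ?_ ?_ ?_ (by omega) (by omega) ?_ ?_
    · beta_reduce
      rw [show m + 1 - 1 = m from by omega]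
      exact hxm
    · beta_reduce
      rw [show m + 1 - m = 1 from by omega]
      exact hx1
    · beta_reduce
      rw [show m + 1 - (m + 1 - t) = t from by omega]
      exact htD
    · beta_reduce
      rw [show m + 1 - 1 = m from by omega, show m + 1 - (m + 1 - t + 1) = t - 1 from by omega]
      exact hadjt
    · beta_reduce
      rw [show m + 1 - m = 1 from by omega, show m + 1 - (m + 1 - t + 1) = t - 1 from by omega]
      exact ht3
    · intro h hh hadj
      beta_reduce at hadj
      rw [show m + 1 - (h + 1) = m - h from by omega, show m + 1 - m = 1 from by omega] at hadj
      have := htmax (m - h + 1) (by omega) (by omega)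
        (by rw [show m - h + 1 - 1 = m - h from by omega]; exact hadj)
      omega
    · beta_reduce
      rw [show m + 1 - 1 = m from by omega, show m + 1 - (m - q) = q + 1 from by omega]
      exact hq4
    · beta_reduce
      rw [show m + 1 - 1 = m from by omega, show m + 1 - (m - q + 1) = q from by omega]
      exact hq3
end

section
/- Let k ≥ 5 be an odd integer and ℓ = (k-1)/2. Let G be a 2-connected simple graph containing no cycle of length at least k, suppose the (ℓ-1)-disintegration H = H(G,ℓ-1) is non-empty, and let P = x₁x₂⋯x_m be a crossing H-path of G with the maximum number of vertices among all H-paths, where m ≥ k. If m ≥ k+1, then P has a unique minimal crossing pair (i,j), and it satisfies j - i - 1 = m - k + 1. If m = k, then every minimal crossing pair (i',j') of P satisfies j' - i' - 1 = 1. -/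
open SimpleGraph

variable {V : Type*}

section Aux
variable {G : SimpleGraph V} {x : ℕ → V} {m : ℕ}

lemma exists_walk_seg (hP : IsIndexedPath G x m) (a b : ℕ) (ha : 1 ≤ a) (hab : a ≤ b)
    (hbm : b ≤ m) :
    ∃ w : G.Walk (x a) (x b),
      w.support = (List.range' a (b - a + 1)).map x ∧ w.length = b - a := by
  induction b, hab using Nat.le_induction with
  | base =>
    refine ⟨Walk.nil, ?_, ?_⟩ <;> simp
  | succ b hab ih =>
    obtain ⟨w, hs, hl⟩ := ih (by omega)
    have hadj : G.Adj (x b) (x (b + 1)) := hP.2 b (by omega) (by omega)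
    refine ⟨w.concat hadj, ?_, ?_⟩
    · rw [Walk.support_concat, hs]
      have h1 : b + 1 - a + 1 = (b - a + 1) + 1 := by omega
      have h2 : a + (b - a + 1) = b + 1 := by omega
      conv_rhs => rw [h1, List.range'_1_concat, h2]
      simp
    · rw [Walk.length_concat, hl]; omega

lemma cross_cycle_bound {k : ℕ} (hcyc : NoCycleGE G k) (hP : IsIndexedPath G x m)
    {i j : ℕ} (h1 : 1 ≤ i) (hij : i < j) (hjm : j ≤ m)
    (hmi : G.Adj (x m) (x i)) (h1j : G.Adj (x 1) (x j))
    (hL : 3 ≤ i + (m - j) + 1) :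
    i + (m - j) + 1 < k := by
  have inj := hP.1
  have hj2 : 2 ≤ j := by omega
  obtain ⟨p1, hp1s, hp1l⟩ := exists_walk_seg hP j m (by omega) (by omega) le_rfl
  obtain ⟨p2, hp2s, hp2l⟩ := exists_walk_seg hP 1 i (by omega) h1 (by omega)
  rw [show i - 1 + 1 = i by omega] at hp2s
  set q : G.Walk (x j) (x 1) := p1.append (Walk.cons hmi p2.reverse) with hq
  have hqs : q.support = List.map x (List.range' j (m - j + 1) ++ (List.range' 1 i).reverse) := by
    rw [hq, Walk.support_append, Walk.support_cons, List.tail_cons, Walk.support_reverse,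
      hp1s, hp2s, List.map_append, List.map_reverse]
  have hmemq : ∀ v ∈ q.support, ∃ t, 1 ≤ t ∧ t ≤ m ∧ x t = v := by
    intro v hv
    rw [hqs] at hv
    obtain ⟨t, ht, rfl⟩ := List.mem_map.mp hv
    simp only [List.mem_append, List.mem_reverse, List.mem_range'_1] at ht
    exact ⟨t, by omega, by omega, rfl⟩
  have hqpath : q.IsPath := by
    rw [Walk.isPath_def, hqs]
    apply List.Nodup.map_on
    · intro t ht u hu hxtu
      simp only [List.mem_append, List.mem_reverse, List.mem_range'_1] at ht hu
      exact inj t u (by omega) (by omega) (by omega) (by omega) hxtu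
    · rw [List.nodup_append]
      refine ⟨List.nodup_range', List.nodup_reverse.mpr List.nodup_range', ?_⟩
      intro t ht u hu
      simp only [List.mem_reverse, List.mem_range'_1] at ht hu
      omega
  have hedge : s(x 1, x j) ∉ q.edges := by
    intro hmem
    rw [hq, Walk.edges_append, Walk.edges_cons] at hmem
    rcases List.mem_append.mp hmem with h | h
    · have := p1.fst_mem_support_of_mem_edges h
      rw [hp1s] at this
      obtain ⟨t, ht, hxt⟩ := List.mem_map.mp this
      simp only [List.mem_range'_1] at ht
      have : t = 1 := inj t 1 (by omega) (by omega) (by omega) (by omega) hxt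
      omega
    · rcases List.mem_cons.mp h with h | h
      · rw [Sym2.eq_iff] at h
        rcases h with ⟨h1', h2'⟩ | ⟨h1', h2'⟩
        · have : (1:ℕ) = m := inj 1 m (by omega) (by omega) (by omega) (by omega) h1'
          omega
        · have hi1 : (1:ℕ) = i := inj 1 i (by omega) (by omega) (by omega) (by omega) h1'
          have hjm' : j = m := inj j m (by omega) (by omega) (by omega) (by omega) h2'
          omega
      · rw [Walk.edges_reverse, List.mem_reverse] at h
        have := p2.snd_mem_support_of_mem_edges h
        rw [hp2s] at this
        obtain ⟨t, ht, hxt⟩ := List.mem_map.mp this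
        simp only [List.mem_range'_1] at ht
        have : t = j := inj t j (by omega) (by omega) (by omega) (by omega) hxt
        omega
  have hcyc' : (Walk.cons h1j q).IsCycle := by
    rw [Walk.cons_isCycle_iff]
    exact ⟨hqpath, hedge⟩
  have hlen : (Walk.cons h1j q).length = i + (m - j) + 1 := by
    rw [Walk.length_cons, hq, Walk.length_append, Walk.length_cons, Walk.length_reverse,
      hp1l, hp2l]
    omega
  have := hcyc (x 1) (Walk.cons h1j q) hcyc'
  omega

lemma mem_path_of_adj_one (hP : IsIndexedPath G x m) {D : Set V}
    (hmax : ∀ (y : ℕ → V) (m' : ℕ), IsIndexedPath G y m' → y 1 ∈ D → y m' ∈ D → m' ≤ m)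
    (hm : 1 ≤ m) (hxm : x m ∈ D) {u : V} (huD : u ∈ D) (hadj : G.Adj (x 1) u) :
    u ∈ pathVerts x m := by
  by_contra hu
  set y : ℕ → V := fun i => if i = 1 then u else x (i - 1) with hy
  have hy1 : y 1 = u := by simp [hy]
  have hyi : ∀ i, 2 ≤ i → y i = x (i - 1) := by
    intro i hi; simp [hy, show i ≠ 1 by omega]
  have hyp : IsIndexedPath G y (m + 1) := by
    constructor
    · intro i j hi him hj hjm hxy
      by_cases hi1 : i = 1 <;> by_cases hj1 : j = 1
      · omega
      · rw [hi1, hy1, hyi j (by omega)] at hxy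
        exact absurd ⟨j - 1, by omega, by omega, hxy.symm⟩ hu
      · rw [hj1, hy1, hyi i (by omega)] at hxy
        exact absurd ⟨i - 1, by omega, by omega, hxy⟩ hu
      · rw [hyi i (by omega), hyi j (by omega)] at hxy
        have := hP.1 (i - 1) (j - 1) (by omega) (by omega) (by omega) (by omega) hxy
        omega
    · intro i hi him
      by_cases hi1 : i = 1
      · subst hi1
        rw [hy1, hyi 2 le_rfl]
        exact hadj.symm
      · rw [hyi i (by omega), hyi (i + 1) (by omega)]
        have := hP.2 (i - 1) (by omega) (by omega)
        rwa [show i - 1 + 1 = i by omega] at this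
        -- need: x (i-1) adj x (i+1-1) = x i
  have h1D : y 1 ∈ D := by rwa [hy1]
  have hmD : y (m + 1) ∈ D := by
    rw [hyi (m + 1) (by omega), show m + 1 - 1 = m by omega]; exact hxm
  have := hmax y (m + 1) hyp h1D hmD
  omega

lemma mem_path_of_adj_last (hP : IsIndexedPath G x m) {D : Set V}
    (hmax : ∀ (y : ℕ → V) (m' : ℕ), IsIndexedPath G y m' → y 1 ∈ D → y m' ∈ D → m' ≤ m)
    (hm : 1 ≤ m) (hx1 : x 1 ∈ D) {u : V} (huD : u ∈ D) (hadj : G.Adj (x m) u) :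
    u ∈ pathVerts x m := by
  by_contra hu
  set y : ℕ → V := fun i => if i ≤ m then x i else u with hy
  have hyi : ∀ i, i ≤ m → y i = x i := by intro i hi; simp [hy, hi]
  have hym : y (m + 1) = u := by simp [hy]
  have hyp : IsIndexedPath G y (m + 1) := by
    constructor
    · intro i j hi him hj hjm hxy
      by_cases hi1 : i ≤ m <;> by_cases hj1 : j ≤ m
      · rw [hyi i hi1, hyi j hj1] at hxy
        exact hP.1 i j hi hi1 hj hj1 hxy
      · rw [hyi i hi1, show j = m + 1 by omega, hym] at hxy
        exact absurd ⟨i, hi, hi1, hxy⟩ hu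
      · rw [hyi j hj1, show i = m + 1 by omega, hym] at hxy
        exact absurd ⟨j, hj, hj1, hxy.symm⟩ hu
      · omega
    · intro i hi him
      by_cases hmi : i < m
      · rw [hyi i (by omega), hyi (i + 1) (by omega)]
        exact hP.2 i hi hmi
      · have : i = m := by omega
        subst this
        rw [hyi i le_rfl, hym]
        exact hadj
  have h1D : y 1 ∈ D := by rw [hyi 1 hm]; exact hx1
  have hmD : y (m + 1) ∈ D := by rwa [hym]
  have := hmax y (m + 1) hyp h1D hmD
  omega

lemma le_card_nbrs {α : ℕ} {v : V} (hv : v ∈ disint G α) (A : Finset ℕ)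
    (hmem : ∀ t, 1 ≤ t → t ≤ m → G.Adj v (x t) → t ∈ A)
    (hpath : ∀ u ∈ disint G α, G.Adj v u → u ∈ pathVerts x m) :
    α + 1 ≤ A.card := by
  classical
  obtain ⟨S, hS, hvS⟩ := hv
  have hSD : ∀ u ∈ S, u ∈ disint G α := fun u hu => ⟨S, hS, hu⟩
  have hdeg := hS v hvS
  refine le_trans hdeg ?_
  have hsub : {u | u ∈ S ∧ G.Adj v u} ⊆ ↑(A.image x) := by
    rintro u ⟨huS, hadj⟩
    obtain ⟨t, ht1, htm, hxt⟩ := hpath u (hSD u huS) hadj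
    exact Finset.mem_coe.mpr (Finset.mem_image.mpr ⟨t, hmem t ht1 htm (by rwa [hxt]), hxt⟩)
  calc {u | u ∈ S ∧ G.Adj v u}.ncard
      ≤ (↑(A.image x) : Set V).ncard := Set.ncard_le_ncard hsub (Finset.finite_toSet _)
    _ = (A.image x).card := Set.ncard_coe_finset _
    _ ≤ A.card := Finset.card_image_le

end Aux

/-- Uniqueness and length of minimal crossing pairs for odd `k` (Claim 3.6). -/
theorem stmt_8 (k ℓ : ℕ) (hk : 5 ≤ k) (hodd : Odd k) (hℓ : ℓ = (k - 1) / 2)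
    {V : Type*} [Fintype V] (G : SimpleGraph V) (h2c : TwoConnected G)
    (hcyc : NoCycleGE G k) (D : Set V) (hD : D = disint G (ℓ - 1)) (hne : D.Nonempty)
    (x : ℕ → V) (m : ℕ) (hP : IsIndexedPath G x m) (hx1 : x 1 ∈ D) (hxm : x m ∈ D)
    (hmax : ∀ (y : ℕ → V) (m' : ℕ), IsIndexedPath G y m' → y 1 ∈ D → y m' ∈ D → m' ≤ m)
    (hmk : k ≤ m) (hcross : ∃ i j, CrossPair G x m i j) :
    (k + 1 ≤ m →
      (∃ i j, MinCrossPair G x m i j) ∧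
      (∀ i j i' j', MinCrossPair G x m i j → MinCrossPair G x m i' j' →
        i = i' ∧ j = j') ∧
      (∀ i j, MinCrossPair G x m i j → j - i - 1 = m - k + 1)) ∧
    (m = k → ∀ i j, MinCrossPair G x m i j → j - i - 1 = 1) := by
  classical
  obtain ⟨kk, hkk⟩ := hodd
  have hk2 : k = 2 * ℓ + 1 := by omega
  have hm5 : 5 ≤ m := by omega
  subst hD
  set A : Finset ℕ := (Finset.Icc 1 m).filter (fun t => G.Adj (x 1) (x t)) with hAdef
  set B : Finset ℕ := (Finset.Icc 1 m).filter (fun t => G.Adj (x m) (x t)) with hBdef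
  have hAmem' : ∀ t, t ∈ A ↔ (1 ≤ t ∧ t ≤ m ∧ G.Adj (x 1) (x t)) := by
    intro t; simp [hAdef, Finset.mem_filter, Finset.mem_Icc, and_assoc]
  have hBmem' : ∀ t, t ∈ B ↔ (1 ≤ t ∧ t ≤ m ∧ G.Adj (x m) (x t)) := by
    intro t; simp [hBdef, Finset.mem_filter, Finset.mem_Icc, and_assoc]
  have hA : ℓ ≤ A.card := by
    have h := le_card_nbrs hx1 A (fun t h1 h2 h3 => (hAmem' t).mpr ⟨h1, h2, h3⟩)
      (fun u hu ha => mem_path_of_adj_one hP hmax (by omega) hxm hu ha)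
    omega
  have hB : ℓ ≤ B.card := by
    have h := le_card_nbrs hxm B (fun t h1 h2 h3 => (hBmem' t).mpr ⟨h1, h2, h3⟩)
      (fun u hu ha => mem_path_of_adj_last hP hmax (by omega) hx1 hu ha)
    omega
  have key : ∀ i j, CrossPair G x m i j → m - (j - i - 1) < k := by
    rintro i j ⟨h1, hij, hjm, hmi, h1j⟩
    by_cases hL : 3 ≤ i + (m - j) + 1
    · have := cross_cycle_bound hcyc hP h1 hij hjm hmi h1j hL
      omega
    · omega
  have h12 : G.Adj (x 1) (x 2) := hP.2 1 le_rfl (by omega)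
  have hAbnd : ∀ t ∈ A, 2 ≤ t ∧ t ≤ m - 1 := by
    intro t htA
    obtain ⟨h1, h2, h3⟩ := (hAmem' t).mp htA
    constructor
    · by_contra hcon
      have ht1 : t = 1 := by omega
      rw [ht1] at h3
      exact h3.ne rfl
    · by_contra hcon
      have htm : t = m := by omega
      rw [htm] at h3
      have hc : CrossPair G x m 1 2 := ⟨le_rfl, by omega, by omega, h3.symm, h12⟩
      have := key 1 2 hc
      omega
  have hBbnd : ∀ t ∈ B, 2 ≤ t ∧ t ≤ m - 1 := by
    intro t htB
    obtain ⟨h1, h2, h3⟩ := (hBmem' t).mp htB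
    constructor
    · by_contra hcon
      have ht1 : t = 1 := by omega
      rw [ht1] at h3
      have hc : CrossPair G x m 1 2 := ⟨le_rfl, by omega, by omega, h3, h12⟩
      have := key 1 2 hc
      omega
    · by_contra hcon
      have htm : t = m := by omega
      rw [htm] at h3
      exact h3.ne rfl
  set A' : Finset ℕ := A.image (fun a => a - 1) with hA'def
  have hA'card : A'.card = A.card := Finset.card_image_of_injOn (fun a ha b hb hab => by
    have := hAbnd a ha; have := hAbnd b hb; omega)
  have hA'mem : ∀ t, t ∈ A' → (1 ≤ t ∧ t ≤ m - 2 ∧ t + 1 ∈ A) := by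
    intro t htA'
    obtain ⟨a, haA, rfl⟩ := Finset.mem_image.mp htA'
    have hb := hAbnd a haA
    exact ⟨by omega, by omega, by rwa [show a - 1 + 1 = a by omega]⟩
  have hdisjA'B : ∀ t, t ∈ A' → t ∈ B → False := by
    intro t htA' htB
    obtain ⟨h1, h2, h3⟩ := hA'mem t htA'
    have hadj1 := ((hAmem' (t + 1)).mp h3).2.2
    have hadjm := ((hBmem' t).mp htB).2.2
    have hc : CrossPair G x m t (t + 1) := ⟨h1, by omega, by omega, hadjm, hadj1⟩
    have := key t (t + 1) hc
    omega
  have pack : ∀ i j, MinCrossPair G x m i j →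
      j - i - 1 = m - k + 1 ∧ A' ∪ B ∪ Finset.Ioo i (j - 1) = Finset.Icc 1 (m - 1) := by
    rintro i j ⟨⟨h1, hij, hjm, hmi, h1j⟩, hmin⟩
    have hiB : i ∈ B := (hBmem' i).mpr ⟨h1, by omega, hmi⟩
    have hjA : j ∈ A := (hAmem' j).mpr ⟨by omega, hjm, h1j⟩
    have hib := hBbnd i hiB
    have hjb := hAbnd j hjA
    have hglow := key i j ⟨h1, hij, hjm, hmi, h1j⟩
    have hdAE : ∀ t ∈ A', t ∉ Finset.Ioo i (j - 1) := by
      intro t htA' htE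
      have hio := Finset.mem_Ioo.mp htE
      have h3 := (hA'mem t htA').2.2
      exact (hmin (t + 1) (by omega) (by omega)).1 ((hAmem' (t + 1)).mp h3).2.2
    have hdBE : ∀ t ∈ B, t ∉ Finset.Ioo i (j - 1) := by
      intro t htB htE
      have hio := Finset.mem_Ioo.mp htE
      exact (hmin t (by omega) (by omega)).2 ((hBmem' t).mp htB).2.2
    have hdisj1 : Disjoint A' B := Finset.disjoint_left.mpr (fun {t} ht h2 => hdisjA'B t ht h2)
    have hdisj2 : Disjoint (A' ∪ B) (Finset.Ioo i (j - 1)) := by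
      rw [Finset.disjoint_left]
      intro t htm htE
      rcases Finset.mem_union.mp htm with h | h
      · exact hdAE t h htE
      · exact hdBE t h htE
    have hsub : A' ∪ B ∪ Finset.Ioo i (j - 1) ⊆ Finset.Icc 1 (m - 1) := by
      intro t htm
      rcases Finset.mem_union.mp htm with h | h
      · rcases Finset.mem_union.mp h with h | h
        · have := hA'mem t h; exact Finset.mem_Icc.mpr ⟨by omega, by omega⟩
        · have := hBbnd t h; exact Finset.mem_Icc.mpr ⟨by omega, by omega⟩
      · have := Finset.mem_Ioo.mp h; exact Finset.mem_Icc.mpr ⟨by omega, by omega⟩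
    have hcardU : (A' ∪ B ∪ Finset.Ioo i (j - 1)).card
        = A'.card + B.card + (j - 1 - i - 1) := by
      rw [Finset.card_union_of_disjoint hdisj2, Finset.card_union_of_disjoint hdisj1,
        Nat.card_Ioo]
    have hle := Finset.card_le_card hsub
    rw [hcardU, Nat.card_Icc] at hle
    have hgap : j - i - 1 = m - k + 1 := by omega
    refine ⟨hgap, Finset.eq_of_subset_of_card_le hsub ?_⟩
    rw [hcardU, Nat.card_Icc]
    omega
  have findmin : ∀ n i j, CrossPair G x m i j → j - i ≤ n →
      ∃ i' j', MinCrossPair G x m i' j' := by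
    intro n
    induction n with
    | zero => intro i j hc hle; exact absurd hc.2.1 (by omega)
    | succ n ih =>
      intro i j hc hle
      by_cases hm' : ∀ h, i < h → h < j → ¬G.Adj (x 1) (x h) ∧ ¬G.Adj (x m) (x h)
      · exact ⟨i, j, hc, hm'⟩
      · have hex : ∃ h, i < h ∧ h < j ∧ (G.Adj (x 1) (x h) ∨ G.Adj (x m) (x h)) := by
          by_contra hno
          push_neg at hno
          exact hm' hno
        obtain ⟨h, hih, hhj, hor⟩ := hex
        obtain ⟨h1, hij, hjm, hmi, h1j⟩ := hc
        rcases hor with ha | ha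
        · exact ih i h ⟨h1, hih, by omega, hmi, ha⟩ (by omega)
        · exact ih h j ⟨by omega, hhj, hjm, ha, h1j⟩ (by omega)
  constructor
  · intro hk1m
    have step : ∀ i1 j1 i2 j2, MinCrossPair G x m i1 j1 → MinCrossPair G x m i2 j2 →
        i1 ≤ i2 := by
      intro i1 j1 i2 j2 hm1 hm2
      obtain ⟨g1, e1⟩ := pack i1 j1 hm1
      obtain ⟨g2, e2⟩ := pack i2 j2 hm2
      obtain ⟨⟨p1, p2, p3, p4, p5⟩, hmin1⟩ := hm1
      obtain ⟨⟨q1, q2, q3, q4, q5⟩, hmin2⟩ := hm2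
      have hmem : i2 + 1 ∈ Finset.Icc 1 (m - 1) := Finset.mem_Icc.mpr ⟨by omega, by omega⟩
      rw [← e1] at hmem
      rcases Finset.mem_union.mp hmem with h | h
      · rcases Finset.mem_union.mp h with h | h
        · exfalso
          have h3 := hA'mem _ h
          have hadj := ((hAmem' (i2 + 1 + 1)).mp h3.2.2).2.2
          exact (hmin2 (i2 + 2) (by omega) (by omega)).1 hadj
        · exfalso
          have hadj := ((hBmem' _).mp h).2.2
          exact (hmin2 (i2 + 1) (by omega) (by omega)).2 hadj
      · have := Finset.mem_Ioo.mp h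
        omega
    obtain ⟨i0, j0, hc0⟩ := hcross
    obtain ⟨i, j, hmc⟩ := findmin (j0 - i0) i0 j0 hc0 le_rfl
    refine ⟨⟨i, j, hmc⟩, ?_, fun i' j' h => (pack i' j' h).1⟩
    intro i1 j1 i2 j2 hm1 hm2
    have hi12 : i1 = i2 := le_antisymm (step i1 j1 i2 j2 hm1 hm2) (step i2 j2 i1 j1 hm2 hm1)
    have g1 := (pack i1 j1 hm1).1
    have g2 := (pack i2 j2 hm2).1
    have hlt1 := hm1.1.2.1
    have hlt2 := hm2.1.2.1
    exact ⟨hi12, by omega⟩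
  · intro hmeq i j hmp
    have := (pack i j hmp).1
    omega
end

section
/- Let k ≥ 6 be an even integer and ℓ = (k-2)/2. Let G be a 2-connected simple graph containing no cycle of length at least k, suppose the (ℓ-1)-disintegration H = H(G,ℓ-1) is non-empty, and let P = x₁x₂⋯x_m be a crossing H-path of G with the maximum number of vertices among all H-paths, where m ≥ k. Let (i,j) be a minimal crossing pair of P whose length j - i - 1 is maximum among minimal crossing pairs of P. Then: if m ≥ k+2, the pair (i,j) is the unique minimal crossing pair of P; if m = k+1, P has at most two minimal crossing pairs; and if m = k, every minimal crossing pair (i',j') of P with (i',j') ≠ (i,j) satisfies j' - i' = 2. -/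
open SimpleGraph

namespace Stmt10Aux
variable {V : Type*}


lemma nodup_map_range (n : ℕ) (f : ℕ → V)
    (hf : ∀ i j, i < n → j < n → f i = f j → i = j) :
    ((List.range n).map f).Nodup := by
  refine List.Nodup.map_on ?_ List.nodup_range
  intro a ha b hb hab
  exact hf a b (List.mem_range.mp ha) (List.mem_range.mp hb) hab

lemma seg_walk (G : SimpleGraph V) (x : ℕ → V) (m : ℕ)
    (hadj : ∀ i, 1 ≤ i → i < m → G.Adj (x i) (x (i + 1))) :
    ∀ (d a : ℕ), 1 ≤ a → a + d ≤ m → ∃ w : G.Walk (x a) (x (a + d)),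
      w.length = d ∧
      w.support = (List.range (d + 1)).map (fun t => x (a + t)) ∧
      w.edges = (List.range d).map (fun t => s(x (a + t), x (a + t + 1))) := by
  intro d
  induction d with
  | zero =>
    intro a ha ham
    exact ⟨Walk.nil, rfl, by rw [List.range_succ]; simp, by simp⟩
  | succ d ih =>
    intro a ha ham
    obtain ⟨w, hl, hs, he⟩ := ih a ha (by omega)
    refine ⟨w.concat (hadj (a + d) (by omega) (by omega)), ?_, ?_, ?_⟩
    · rw [Walk.length_concat, hl]
    · rw [Walk.support_concat, hs, List.range_succ]
      simp [List.range_succ]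
    · rw [Walk.edges_concat, he, List.concat_eq_append, List.range_succ]
      simp [List.range_succ]
      exact Or.inl rfl


lemma cycle_of_chord (G : SimpleGraph V) (x : ℕ → V) (m : ℕ)
    (hinj : ∀ i j, 1 ≤ i → i ≤ m → 1 ≤ j → j ≤ m → x i = x j → i = j)
    (hadj : ∀ i, 1 ≤ i → i < m → G.Adj (x i) (x (i + 1)))
    (a d : ℕ) (ha : 1 ≤ a) (hd : 2 ≤ d) (ham : a + d ≤ m)
    (hchord : G.Adj (x (a + d)) (x a)) :
    ∃ (v : V) (w : G.Walk v v), w.IsCycle ∧ w.length = d + 1 := by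
  obtain ⟨w, hl, hs, he⟩ := seg_walk G x m hadj d a ha ham
  refine ⟨x (a + d), Walk.cons hchord w, ?_, ?_⟩
  · rw [Walk.cons_isCycle_iff]
    constructor
    · rw [Walk.isPath_def, hs]
      exact nodup_map_range _ _ (fun i j hi hj hij => by
        have := hinj (a + i) (a + j) (by omega) (by omega) (by omega) (by omega) hij
        omega)
    · intro hmem
      rw [he] at hmem
      obtain ⟨t, ht, heq⟩ := List.mem_map.mp hmem
      rw [List.mem_range] at ht
      rcases Sym2.eq_iff.mp heq with ⟨h1, h2⟩ | ⟨h1, h2⟩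
      · have := hinj (a + t) (a + d) (by omega) (by omega) (by omega) (by omega) h1
        omega
      · have e1 := hinj (a + t) a (by omega) (by omega) (by omega) (by omega) h1
        have e2 := hinj (a + t + 1) (a + d) (by omega) (by omega) (by omega) (by omega) h2
        omega
  · rw [Walk.length_cons, hl]

lemma cycle_of_cross (G : SimpleGraph V) (x : ℕ → V) (m a b c : ℕ)
    (hinj : ∀ i j, 1 ≤ i → i ≤ m → 1 ≤ j → j ≤ m → x i = x j → i = j)
    (hadj : ∀ i, 1 ≤ i → i < m → G.Adj (x i) (x (i + 1)))
    (hm : m = 1 + a + b + c) (ha : 1 ≤ a) (hb : 1 ≤ b) (hc : 1 ≤ c)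
    (h1 : G.Adj (x m) (x (1 + a))) (h2 : G.Adj (x 1) (x (1 + a + b))) :
    ∃ (v : V) (w : G.Walk v v), w.IsCycle ∧ w.length = a + c + 2 := by
  subst hm
  obtain ⟨w1, hl1, hs1, he1⟩ := seg_walk G x _ hadj a 1 le_rfl (by omega)
  obtain ⟨w2, hl2, hs2, he2⟩ := seg_walk G x _ hadj c (1 + a + b) (by omega) (by omega)
  refine ⟨x (1 + a + b + c), Walk.cons h1 (w1.reverse.append (Walk.cons h2 w2)), ?_, ?_⟩
  · rw [Walk.cons_isCycle_iff]
    constructor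
    · rw [Walk.isPath_def, Walk.support_append, Walk.support_reverse, hs1,
        Walk.support_cons, List.tail_cons, hs2, List.nodup_append]
      refine ⟨List.nodup_reverse.mpr (nodup_map_range _ _ (fun i j hi hj hij => by
          have := hinj (1 + i) (1 + j) (by omega) (by omega) (by omega) (by omega) hij
          omega)),
        nodup_map_range _ _ (fun i j hi hj hij => by
          have := hinj (1 + a + b + i) (1 + a + b + j) (by omega) (by omega) (by omega)
            (by omega) hij
          omega), ?_⟩
      intro v hv1 v' hv2 hvv
      rw [List.mem_reverse] at hv1
      obtain ⟨t, ht, rfl⟩ := List.mem_map.mp hv1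
      obtain ⟨t', ht', heq⟩ := List.mem_map.mp hv2
      subst hvv
      rw [List.mem_range] at ht ht'
      have := hinj (1 + a + b + t') (1 + t) (by omega) (by omega) (by omega) (by omega) heq
      omega
    · intro hmem
      rw [Walk.edges_append, Walk.edges_reverse, he1, Walk.edges_cons, he2,
        List.mem_append, List.mem_reverse, List.mem_cons] at hmem
      rcases hmem with hmem | hmem | hmem
      · obtain ⟨t, ht, heq⟩ := List.mem_map.mp hmem
        rw [List.mem_range] at ht
        rcases Sym2.eq_iff.mp heq.symm with ⟨e1, e2⟩ | ⟨e1, e2⟩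
        · have := hinj (1 + a + b + c) (1 + t) (by omega) (by omega) (by omega) (by omega) e1
          omega
        · have := hinj (1 + a + b + c) (1 + t + 1) (by omega) (by omega) (by omega)
            (by omega) e1
          omega
      · rcases Sym2.eq_iff.mp hmem with ⟨e1, e2⟩ | ⟨e1, e2⟩
        · have := hinj (1 + a + b + c) 1 (by omega) (by omega) (by omega) (by omega) e1
          omega
        · have := hinj (1 + a + b + c) (1 + a + b) (by omega) (by omega) (by omega)
            (by omega) e1
          omega
      · obtain ⟨t, ht, heq⟩ := List.mem_map.mp hmem
        rw [List.mem_range] at ht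
        rcases Sym2.eq_iff.mp heq.symm with ⟨e1, e2⟩ | ⟨e1, e2⟩
        · have := hinj (1 + a + b + c) (1 + a + b + t) (by omega) (by omega) (by omega)
            (by omega) e1
          omega
        · have := hinj (1 + a) (1 + a + b + t) (by omega) (by omega) (by omega)
            (by omega) e2
          omega
  · rw [Walk.length_cons, Walk.length_append, Walk.length_reverse, Walk.length_cons,
      hl1, hl2]
    omega

end Stmt10Aux



open SimpleGraph

variable {V : Type*}

set_option maxHeartbeats 1000000

/-- Number of minimal crossing pairs for even `k` (Claim 3.9). -/
theorem stmt_10 (k ℓ : ℕ) (hk : 6 ≤ k) (heven : Even k) (hℓ : ℓ = (k - 2) / 2)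
    {V : Type*} [Fintype V] (G : SimpleGraph V) (h2c : TwoConnected G)
    (hcyc : NoCycleGE G k) (D : Set V) (hD : D = disint G (ℓ - 1)) (hne : D.Nonempty)
    (x : ℕ → V) (m : ℕ) (hP : IsIndexedPath G x m) (hx1 : x 1 ∈ D) (hxm : x m ∈ D)
    (hmax : ∀ (y : ℕ → V) (m' : ℕ), IsIndexedPath G y m' → y 1 ∈ D → y m' ∈ D → m' ≤ m)
    (hmk : k ≤ m) (i j : ℕ) (hij : MinCrossPair G x m i j)
    (hlen : ∀ i' j', MinCrossPair G x m i' j' → j' - i' - 1 ≤ j - i - 1) :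
    (k + 2 ≤ m → ∀ i' j', MinCrossPair G x m i' j' → i' = i ∧ j' = j) ∧
    (m = k + 1 → ∀ p₁ p₂ p₃ : ℕ × ℕ,
      MinCrossPair G x m p₁.1 p₁.2 → MinCrossPair G x m p₂.1 p₂.2 →
      MinCrossPair G x m p₃.1 p₃.2 → p₁ = p₂ ∨ p₁ = p₃ ∨ p₂ = p₃) ∧
    (m = k → ∀ i' j', MinCrossPair G x m i' j' → (i', j') ≠ (i, j) → j' - i' = 2) := by
  classical
  obtain ⟨hxinj, hxadj⟩ := hP
  have hm6 : 6 ≤ m := hk.trans hmk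
  have hl2 : 2 ≤ ℓ := by omega
  have h2l : ℓ + ℓ = k - 2 := by obtain ⟨r, hr⟩ := heven; omega
  -- bound on neighbours of x 1 along the path
  have hB0 : ∀ t, 1 ≤ t → t ≤ m → G.Adj (x 1) (x t) → 2 ≤ t ∧ t + 1 ≤ k := by
    intro t ht1 htm hadj
    have ht2 : 2 ≤ t := by
      rcases Nat.lt_or_ge t 2 with h | h
      · exfalso
        have : t = 1 := by omega
        rw [this] at hadj
        exact G.irrefl hadj
      · exact h
    refine ⟨ht2, ?_⟩
    by_cases hc : 3 ≤ t
    · obtain ⟨d, rfl⟩ : ∃ d, t = 1 + d := ⟨t - 1, by omega⟩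
      obtain ⟨v, w, hw, hwl⟩ := Stmt10Aux.cycle_of_chord G x m hxinj hxadj 1 d le_rfl
        (by omega) (by omega) hadj.symm
      have := hcyc v w hw
      omega
    · omega
  -- bound on neighbours of x m along the path
  have hA0 : ∀ t, 1 ≤ t → t ≤ m → G.Adj (x m) (x t) → m + 2 ≤ k + t ∧ t + 1 ≤ m := by
    intro t ht1 htm hadj
    have htm' : t ≠ m := by
      intro h; rw [h] at hadj; exact G.irrefl hadj
    refine ⟨?_, by omega⟩
    by_cases hc : t + 2 ≤ m
    · obtain ⟨d, hdm, hd2⟩ : ∃ d, m = t + d ∧ 2 ≤ d := ⟨m - t, by omega, by omega⟩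
      have hchord : G.Adj (x (t + d)) (x t) := by rw [← hdm]; exact hadj
      obtain ⟨v, w, hw, hwl⟩ := Stmt10Aux.cycle_of_chord G x m hxinj hxadj t d ht1 hd2
        (by omega) hchord
      have := hcyc v w hw
      omega
    · omega
  -- crossing pairs span almost the whole path
  have hPair : ∀ u v', CrossPair G x m u v' → m + 2 + u ≤ k + v' := by
    intro u v' hcp
    obtain ⟨hu1, huv, hvm, hadjmu, hadj1v⟩ := hcp
    have hAu := hA0 u hu1 (by omega) hadjmu
    have hBv := hB0 v' (by omega) hvm hadj1v
    obtain ⟨a, b, c, hmabc, ha, hb, hc, hua, hvab⟩ :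
        ∃ a b c, m = 1 + a + b + c ∧ 1 ≤ a ∧ 1 ≤ b ∧ 1 ≤ c ∧ u = 1 + a ∧ v' = 1 + a + b :=
      ⟨u - 1, v' - u, m - v', by omega, by omega, by omega, by omega, by omega, by omega⟩
    rw [hua] at hadjmu
    rw [hvab] at hadj1v
    obtain ⟨v0, w, hw, hwl⟩ := Stmt10Aux.cycle_of_cross G x m a b c hxinj hxadj hmabc
      ha hb hc hadjmu hadj1v
    have := hcyc v0 w hw
    omega
  set A : Finset ℕ := (Finset.Icc 1 m).filter (fun t => G.Adj (x m) (x t)) with hAdef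
  set B : Finset ℕ := (Finset.Icc 1 m).filter (fun t => G.Adj (x 1) (x t)) with hBdef
  set MP : Finset (ℕ × ℕ) :=
    ((Finset.Icc 1 m) ×ˢ (Finset.Icc 1 m)).filter (fun p => MinCrossPair G x m p.1 p.2)
    with hMPdef
  have hmemA : ∀ t, t ∈ A ↔ (1 ≤ t ∧ t ≤ m ∧ G.Adj (x m) (x t)) := by
    intro t
    rw [hAdef, Finset.mem_filter, Finset.mem_Icc]
    tauto
  have hmemB : ∀ t, t ∈ B ↔ (1 ≤ t ∧ t ≤ m ∧ G.Adj (x 1) (x t)) := by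
    intro t
    rw [hBdef, Finset.mem_filter, Finset.mem_Icc]
    tauto
  have hAbd : ∀ t ∈ A, m + 2 ≤ k + t ∧ t + 1 ≤ m := by
    intro t ht
    rw [hmemA] at ht
    exact hA0 t ht.1 ht.2.1 ht.2.2
  have hBbd : ∀ t ∈ B, 2 ≤ t ∧ t + 1 ≤ k := by
    intro t ht
    rw [hmemB] at ht
    exact hB0 t ht.1 ht.2.1 ht.2.2
  have hMPmem : ∀ i' j', MinCrossPair G x m i' j' → (i', j') ∈ MP := by
    intro i' j' h
    obtain ⟨h1, h2, h3, -, -⟩ := h.1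
    rw [hMPdef, Finset.mem_filter, Finset.mem_product]
    exact ⟨⟨Finset.mem_Icc.mpr ⟨h1, by omega⟩, Finset.mem_Icc.mpr ⟨by omega, h3⟩⟩, h⟩
  have hMPprop : ∀ p ∈ MP, MinCrossPair G x m p.1 p.2 := by
    intro p hp
    rw [hMPdef, Finset.mem_filter] at hp
    exact hp.2
  have hMPfacts : ∀ p ∈ MP, p.1 ∈ A ∧ p.2 ∈ B ∧ m + 2 + p.1 ≤ k + p.2 := by
    intro p hp
    obtain ⟨⟨h1, h2, h3, ha4, ha5⟩, hmin⟩ := hMPprop p hp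
    refine ⟨?_, ?_, hPair p.1 p.2 ⟨h1, h2, h3, ha4, ha5⟩⟩
    · rw [hmemA]; exact ⟨h1, by omega, ha4⟩
    · rw [hmemB]; exact ⟨by omega, h3, ha5⟩
  have hMPint : ∀ p ∈ MP, ∀ h, p.1 < h → h < p.2 → h ∉ A ∧ h ∉ B := by
    intro p hp h hh1 hh2
    have hm' := (hMPprop p hp).2 h hh1 hh2
    constructor
    · intro hA'; rw [hmemA] at hA'; exact hm'.2 hA'.2.2
    · intro hB'; rw [hmemB] at hB'; exact hm'.1 hB'.2.2
  -- disjointness of interiors of distinct minimal crossing pairs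
  have hdisj : ∀ p ∈ MP, ∀ q ∈ MP, p ≠ q →
      Disjoint (Finset.Ioo p.1 p.2) (Finset.Ioo q.1 q.2) := by
    intro p hp q hq hne'
    rcases lt_trichotomy p.1 q.1 with h | h | h
    · have hq1A : q.1 ∈ A := (hMPfacts q hq).1
      have hnlt : ¬(p.1 < q.1 ∧ q.1 < p.2) := fun hcon => (hMPint p hp q.1 hcon.1 hcon.2).1 hq1A
      rw [Finset.disjoint_left]
      intro t ht ht'
      rw [Finset.mem_Ioo] at ht ht'
      omega
    · exfalso
      have hne2 : p.2 ≠ q.2 := fun h2 => hne' (Prod.ext h h2)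
      rcases lt_trichotomy p.2 q.2 with h2 | h2 | h2
      · have hp2B : p.2 ∈ B := (hMPfacts p hp).2.1
        have hp12 : p.1 < p.2 := (hMPprop p hp).1.2.1
        exact (hMPint q hq p.2 (by omega) h2).2 hp2B
      · exact hne2 h2
      · have hq2B : q.2 ∈ B := (hMPfacts q hq).2.1
        have hq12 : q.1 < q.2 := (hMPprop q hq).1.2.1
        exact (hMPint p hp q.2 (by omega) h2).2 hq2B
    · have hp1A : p.1 ∈ A := (hMPfacts p hp).1
      have hnlt : ¬(q.1 < p.1 ∧ p.1 < q.2) := fun hcon => (hMPint q hq p.1 hcon.1 hcon.2).1 hp1A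
      rw [Finset.disjoint_left]
      intro t ht ht'
      rw [Finset.mem_Ioo] at ht ht'
      omega
  -- the main counting inequality
  have hcount : (A ∪ B).card + ∑ p ∈ MP, (p.2 - p.1 - 1) ≤ m - 2 := by
    have hsub : (A ∪ B) ∪ MP.biUnion (fun p => Finset.Ioo p.1 p.2) ⊆
        Finset.Icc 2 (m - 1) := by
      intro t ht
      rcases Finset.mem_union.mp ht with ht' | ht'
      · rcases Finset.mem_union.mp ht' with hA' | hB'
        · have := hAbd t hA'
          exact Finset.mem_Icc.mpr (by omega)
        · have := hBbd t hB'
          exact Finset.mem_Icc.mpr (by omega)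
      · obtain ⟨p, hp, hIoo⟩ := Finset.mem_biUnion.mp ht'
        rw [Finset.mem_Ioo] at hIoo
        have h1 := hAbd p.1 (hMPfacts p hp).1
        have h2 := hBbd p.2 (hMPfacts p hp).2.1
        exact Finset.mem_Icc.mpr (by omega)
    have hdisj2 : Disjoint (A ∪ B) (MP.biUnion fun p => Finset.Ioo p.1 p.2) := by
      rw [Finset.disjoint_right]
      intro t ht hAB
      obtain ⟨p, hp, hIoo⟩ := Finset.mem_biUnion.mp ht
      rw [Finset.mem_Ioo] at hIoo
      have hint := hMPint p hp t hIoo.1 hIoo.2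
      rcases Finset.mem_union.mp hAB with h | h
      exacts [hint.1 h, hint.2 h]
    have hcard := Finset.card_le_card hsub
    rw [Finset.card_union_of_disjoint hdisj2, Finset.card_biUnion hdisj] at hcard
    simp only [Nat.card_Ioo] at hcard
    rw [Nat.card_Icc] at hcard
    omega
  -- every D-neighbour of an endpoint lies on the path
  have hext_end : ∀ u, u ∈ D → G.Adj (x m) u → ∃ t, 1 ≤ t ∧ t ≤ m ∧ x t = u := by
    intro u hu hadj
    by_contra hcon
    push_neg at hcon
    have hpath : IsIndexedPath G (fun t => if t ≤ m then x t else u) (m + 1) := by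
      constructor
      · intro a b ha ham hb hbm heq
        dsimp only at heq
        rcases Nat.lt_or_ge m a with h1 | h1
        · rw [if_neg (by omega)] at heq
          rcases Nat.lt_or_ge m b with h2 | h2
          · omega
          · rw [if_pos h2] at heq
            exact absurd heq.symm (hcon b hb h2)
        · rw [if_pos h1] at heq
          rcases Nat.lt_or_ge m b with h2 | h2
          · rw [if_neg (by omega)] at heq
            exact absurd heq (hcon a ha h1)
          · rw [if_pos h2] at heq
            exact hxinj a b ha h1 hb h2 heq
      · intro a ha ham
        dsimp only
        rcases Nat.lt_or_ge a m with h1 | h1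
        · rw [if_pos (by omega), if_pos (by omega)]
          exact hxadj a ha h1
        · have haem : a = m := by omega
          rw [if_pos (by omega), if_neg (by omega), haem]
          exact hadj
    have hD1 : (fun t => if t ≤ m then x t else u) 1 ∈ D := by
      have he : (fun t => if t ≤ m then x t else u) 1 = x 1 := by
        dsimp only
        rw [if_pos (by omega)]
      rw [he]; exact hx1
    have hD2 : (fun t => if t ≤ m then x t else u) (m + 1) ∈ D := by
      have he : (fun t => if t ≤ m then x t else u) (m + 1) = u := by
        dsimp only
        rw [if_neg (by omega)]
      rw [he]; exact hu
    have := hmax _ _ hpath hD1 hD2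
    omega
  have hext_start : ∀ u, u ∈ D → G.Adj (x 1) u → ∃ t, 1 ≤ t ∧ t ≤ m ∧ x t = u := by
    intro u hu hadj
    by_contra hcon
    push_neg at hcon
    have hpath : IsIndexedPath G (fun t => if t = 1 then u else x (t - 1)) (m + 1) := by
      constructor
      · intro a b ha ham hb hbm heq
        dsimp only at heq
        by_cases ha1 : a = 1
        · by_cases hb1 : b = 1
          · omega
          · rw [if_pos ha1, if_neg hb1] at heq
            exact absurd heq.symm (hcon (b - 1) (by omega) (by omega))
        · by_cases hb1 : b = 1
          · rw [if_neg ha1, if_pos hb1] at heq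
            exact absurd heq (hcon (a - 1) (by omega) (by omega))
          · rw [if_neg ha1, if_neg hb1] at heq
            have := hxinj (a - 1) (b - 1) (by omega) (by omega) (by omega) (by omega) heq
            omega
      · intro a ha ham
        dsimp only
        by_cases ha1 : a = 1
        · rw [if_pos ha1, if_neg (by omega)]
          have he : a + 1 - 1 = 1 := by omega
          rw [he]
          exact hadj.symm
        · rw [if_neg ha1, if_neg (by omega)]
          have he : a + 1 - 1 = (a - 1) + 1 := by omega
          rw [he]
          exact hxadj (a - 1) (by omega) (by omega)
    have hD1 : (fun t => if t = 1 then u else x (t - 1)) 1 ∈ D := by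
      have he : (fun t => if t = 1 then u else x (t - 1)) 1 = u := by
        dsimp only
        rw [if_pos rfl]
      rw [he]; exact hu
    have hD2 : (fun t => if t = 1 then u else x (t - 1)) (m + 1) ∈ D := by
      have he : (fun t => if t = 1 then u else x (t - 1)) (m + 1) = x m := by
        dsimp only
        rw [if_neg (by omega)]
        have e : m + 1 - 1 = m := by omega
        rw [e]
      rw [he]; exact hxm
    have := hmax _ _ hpath hD1 hD2
    omega
  -- endpoints have at least ℓ neighbours on the path
  have hdeg : ∀ v, v ∈ D → ℓ ≤ {u | u ∈ D ∧ G.Adj v u}.ncard := by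
    intro v hv
    rw [hD] at hv
    obtain ⟨S, hS, hvS⟩ := hv
    have hSD : S ⊆ D := by
      intro w hw
      rw [hD]
      exact ⟨S, hS, hw⟩
    have h1 := hS v hvS
    have h2 : {u | u ∈ S ∧ G.Adj v u} ⊆ {u | u ∈ D ∧ G.Adj v u} :=
      fun u hu => ⟨hSD hu.1, hu.2⟩
    have h3 := Set.ncard_le_ncard h2 (Set.toFinite _)
    omega
  have hcardA : ℓ ≤ A.card := by
    have hsub2 : {u | u ∈ D ∧ G.Adj (x m) u} ⊆ x '' (A : Set ℕ) := by
      rintro u ⟨hu, hadj⟩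
      obtain ⟨t, ht1, htm, htx⟩ := hext_end u hu hadj
      refine ⟨t, ?_, htx⟩
      rw [Finset.mem_coe, hmemA]
      exact ⟨ht1, htm, by rw [htx]; exact hadj⟩
    calc ℓ ≤ {u | u ∈ D ∧ G.Adj (x m) u}.ncard := hdeg _ hxm
      _ ≤ (x '' (A : Set ℕ)).ncard := Set.ncard_le_ncard hsub2 (Set.toFinite _)
      _ ≤ (A : Set ℕ).ncard := Set.ncard_image_le (Set.toFinite _)
      _ = A.card := Set.ncard_coe_finset _
  have hcardB : ℓ ≤ B.card := by
    have hsub2 : {u | u ∈ D ∧ G.Adj (x 1) u} ⊆ x '' (B : Set ℕ) := by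
      rintro u ⟨hu, hadj⟩
      obtain ⟨t, ht1, htm, htx⟩ := hext_start u hu hadj
      refine ⟨t, ?_, htx⟩
      rw [Finset.mem_coe, hmemB]
      exact ⟨ht1, htm, by rw [htx]; exact hadj⟩
    calc ℓ ≤ {u | u ∈ D ∧ G.Adj (x 1) u}.ncard := hdeg _ hx1
      _ ≤ (x '' (B : Set ℕ)).ncard := Set.ncard_le_ncard hsub2 (Set.toFinite _)
      _ ≤ (B : Set ℕ).ncard := Set.ncard_image_le (Set.toFinite _)
      _ = B.card := Set.ncard_coe_finset _
  -- common neighbours inject into minimal crossing pairs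
  have hG6 : (A ∩ B).card ≤ MP.card + 1 := by
    rcases (A ∩ B).eq_empty_or_nonempty with hR | hR
    · rw [hR]; simp
    · have hMmem := (A ∩ B).max'_mem hR
      set M := (A ∩ B).max' hR with hMdef
      have hMB : M ∈ B := (Finset.mem_inter.mp hMmem).2
      set vB : ℕ → ℕ := fun r =>
        if h : (B.filter (fun s => r < s)).Nonempty then (B.filter (fun s => r < s)).min' h
        else 0 with hvBdef
      set uA : ℕ → ℕ := fun r =>
        if h : (A.filter (fun s => s < vB r)).Nonempty then
          (A.filter (fun s => s < vB r)).max' h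
        else 0 with huAdef
      have hkey : ∀ r ∈ (A ∩ B).erase M,
          (vB r ∈ B ∧ r < vB r ∧ ∀ t ∈ B, r < t → vB r ≤ t) ∧
          (uA r ∈ A ∧ uA r < vB r ∧ r ≤ uA r ∧ ∀ t ∈ A, t < vB r → t ≤ uA r) := by
        intro r hr
        obtain ⟨hrne, hrmem⟩ := Finset.mem_erase.mp hr
        have hrA : r ∈ A := (Finset.mem_inter.mp hrmem).1
        have hrM : r < M := lt_of_le_of_ne ((A ∩ B).le_max' r hrmem) hrne
        have hne1 : (B.filter (fun s => r < s)).Nonempty :=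
          ⟨M, Finset.mem_filter.mpr ⟨hMB, hrM⟩⟩
        have hvB1 : vB r = (B.filter (fun s => r < s)).min' hne1 := by
          simp only [hvBdef]
          exact dif_pos hne1
        have hvmem : vB r ∈ B ∧ r < vB r := by
          rw [hvB1]
          have h := (B.filter (fun s => r < s)).min'_mem hne1
          rw [Finset.mem_filter] at h
          exact h
        have hvle : ∀ t ∈ B, r < t → vB r ≤ t := by
          intro t ht hrt
          rw [hvB1]
          exact Finset.min'_le (B.filter (fun s => r < s)) t (Finset.mem_filter.mpr ⟨ht, hrt⟩)
        have hne2 : (A.filter (fun s => s < vB r)).Nonempty :=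
          ⟨r, Finset.mem_filter.mpr ⟨hrA, hvmem.2⟩⟩
        have huA1 : uA r = (A.filter (fun s => s < vB r)).max' hne2 := by
          simp only [huAdef]
          exact dif_pos hne2
        have humem : uA r ∈ A ∧ uA r < vB r := by
          rw [huA1]
          have h := (A.filter (fun s => s < vB r)).max'_mem hne2
          rw [Finset.mem_filter] at h
          exact h
        have hule : ∀ t ∈ A, t < vB r → t ≤ uA r := by
          intro t ht htv
          rw [huA1]
          exact Finset.le_max' (A.filter (fun s => s < vB r)) t (Finset.mem_filter.mpr ⟨ht, htv⟩)
        exact ⟨⟨hvmem.1, hvmem.2, hvle⟩,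
          ⟨humem.1, humem.2, hule r hrA hvmem.2, hule⟩⟩
      have hmaps : ∀ r ∈ (A ∩ B).erase M, (uA r, vB r) ∈ MP := by
        intro r hr
        obtain ⟨⟨hvB', hrv, hvle⟩, ⟨huA', huv, hru, hule⟩⟩ := hkey r hr
        have h1 := (hmemA (uA r)).mp huA'
        have h2 := (hmemB (vB r)).mp hvB'
        apply hMPmem
        refine ⟨⟨h1.1, huv, h2.2.1, h1.2.2, h2.2.2⟩, ?_⟩
        intro h hh1 hh2
        constructor
        · intro hadj1
          have hhB : h ∈ B := (hmemB h).mpr ⟨by omega, by omega, hadj1⟩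
          have := hvle h hhB (by omega)
          omega
        · intro hadjm
          have hhA : h ∈ A := (hmemA h).mpr ⟨by omega, by omega, hadjm⟩
          have := hule h hhA hh2
          omega
      have hinjOn : Set.InjOn (fun r => (uA r, vB r)) ((A ∩ B).erase M : Set ℕ) := by
        intro r hr r' hr' heq
        rw [Finset.mem_coe] at hr hr'
        rw [Prod.mk.injEq] at heq
        rcases lt_trichotomy r r' with h | h | h
        · exfalso
          obtain ⟨⟨_, _, hvle⟩, ⟨_, huv, _, _⟩⟩ := hkey r hr
          obtain ⟨_, ⟨_, _, hru', _⟩⟩ := hkey r' hr'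
          have hr'B : r' ∈ B := (Finset.mem_inter.mp (Finset.mem_erase.mp hr').2).2
          have := hvle r' hr'B h
          omega
        · exact h
        · exfalso
          obtain ⟨⟨_, _, hvle'⟩, ⟨_, huv', _, _⟩⟩ := hkey r' hr'
          obtain ⟨_, ⟨_, _, hru, _⟩⟩ := hkey r hr
          have hrB : r ∈ B := (Finset.mem_inter.mp (Finset.mem_erase.mp hr).2).2
          have := hvle' r hrB h
          omega
      have hle := Finset.card_le_card_of_injOn _ hmaps hinjOn
      have herase := Finset.card_erase_add_one hMmem
      omega
  have hijMP : (i, j) ∈ MP := hMPmem i j hij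
  have hABc := Finset.card_union_add_card_inter A B
  refine ⟨?_, ?_, ?_⟩
  · -- m ≥ k + 2 : unique minimal crossing pair
    intro hm2 i' j' hij'
    by_contra hcon
    have hne' : (i', j') ≠ (i, j) := by
      intro h
      rw [Prod.mk.injEq] at h
      exact hcon ⟨h.1, h.2⟩
    have hi'MP : (i', j') ∈ MP := hMPmem i' j' hij'
    have h2card : 2 ≤ MP.card := Finset.one_lt_card.mpr ⟨_, hi'MP, _, hijMP, hne'⟩
    have hSlow : MP.card * (m - k + 1) ≤ ∑ p ∈ MP, (p.2 - p.1 - 1) := by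
      have h := Finset.card_nsmul_le_sum MP (fun p => p.2 - p.1 - 1) (m - k + 1)
        (fun p hp => by
          have := (hMPfacts p hp).2.2
          show m - k + 1 ≤ p.2 - p.1 - 1
          omega)
      rwa [smul_eq_mul] at h
    have hexp : MP.card * (m - k + 1) = MP.card * (m - k) + MP.card := by ring
    rw [hexp] at hSlow
    have hmono : 2 * (m - k) ≤ MP.card * (m - k) :=
      Nat.mul_le_mul_right _ h2card
    generalize hgen : MP.card * (m - k) = tt at hSlow hmono
    omega
  · -- m = k + 1 : at most two minimal crossing pairs
    intro hm1 p₁ p₂ p₃ h₁ h₂ h₃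
    by_contra hcon
    push_neg at hcon
    obtain ⟨hne12, hne13, hne23⟩ := hcon
    have hm₁ : p₁ ∈ MP := by have h := hMPmem p₁.1 p₁.2 h₁; simpa using h
    have hm₂ : p₂ ∈ MP := by have h := hMPmem p₂.1 p₂.2 h₂; simpa using h
    have hm₃ : p₃ ∈ MP := by have h := hMPmem p₃.1 p₃.2 h₃; simpa using h
    have h3card : 3 ≤ MP.card := by
      have hsub3 : ({p₁, p₂, p₃} : Finset (ℕ × ℕ)) ⊆ MP := by
        intro p hp
        simp only [Finset.mem_insert, Finset.mem_singleton] at hp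
        rcases hp with rfl | rfl | rfl <;> assumption
      have hc3 : ({p₁, p₂, p₃} : Finset (ℕ × ℕ)).card = 3 := by
        rw [Finset.card_insert_of_notMem (by simp [hne12, hne13]),
          Finset.card_insert_of_notMem (by simp [hne23]), Finset.card_singleton]
      calc 3 = ({p₁, p₂, p₃} : Finset (ℕ × ℕ)).card := hc3.symm
        _ ≤ MP.card := Finset.card_le_card hsub3
    have hSlow : MP.card * 2 ≤ ∑ p ∈ MP, (p.2 - p.1 - 1) := by
      have h := Finset.card_nsmul_le_sum MP (fun p => p.2 - p.1 - 1) 2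
        (fun p hp => by
          have := (hMPfacts p hp).2.2
          show 2 ≤ p.2 - p.1 - 1
          omega)
      rwa [smul_eq_mul] at h
    omega
  · -- m = k : any other minimal crossing pair has j' - i' = 2
    intro hm0 i' j' hij' hnepair
    have hpair' := hPair i' j' hij'.1
    by_contra hne2
    have hi'MP : (i', j') ∈ MP := hMPmem i' j' hij'
    have hγ2 : 2 ≤ j - i - 1 := by
      have := hlen i' j' hij'
      have hij12 : i' < j' := hij'.1.2.1
      omega
    have hsum1 := Finset.add_sum_erase MP (fun p => p.2 - p.1 - 1) hijMP
    have hi'mem : (i', j') ∈ MP.erase (i, j) := Finset.mem_erase.mpr ⟨hnepair, hi'MP⟩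
    have hsum2 := Finset.add_sum_erase (MP.erase (i, j)) (fun p => p.2 - p.1 - 1) hi'mem
    have hSlow : ((MP.erase (i, j)).erase (i', j')).card * 1 ≤
        ∑ p ∈ (MP.erase (i, j)).erase (i', j'), (p.2 - p.1 - 1) := by
      have h := Finset.card_nsmul_le_sum ((MP.erase (i, j)).erase (i', j'))
        (fun p => p.2 - p.1 - 1) 1 (fun p hp => by
          have hpMP : p ∈ MP := Finset.mem_of_mem_erase (Finset.mem_of_mem_erase hp)
          have := (hMPfacts p hpMP).2.2
          show 1 ≤ p.2 - p.1 - 1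
          omega)
      rwa [smul_eq_mul] at h
    have hc1 := Finset.card_erase_of_mem hi'mem
    have hc2 := Finset.card_erase_of_mem hijMP
    have h2card : 2 ≤ MP.card := Finset.one_lt_card.mpr ⟨_, hi'MP, _, hijMP, hnepair⟩
    have hijpair : i < j := hij.1.2.1
    have hi'j' : i' < j' := hij'.1.2.1
    dsimp only at hsum1 hsum2
    omega
end
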